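/- arXiv:1406.2522 — 16 statements merged into one kernel-verified Lean document; each statement's English description precedes it below -/
import Mathlib

section
/- Let n be a positive integer and let A ∈ M_n(ℂ) be a nonzero matrix. Then the Schur map S_A is multiplicative (with respect to ordinary matrix multiplication) if and only if A_{ii} = 1 for all i and A_{ij} = A_{ik} · A_{kj} for all indices i, j, k. -/
open Matrix

theorem schur_multiplicative_iff (n : ℕ) (hn : 0 < n)
    (A : Matrix (Fin n) (Fin n) ℂ) (hA : A ≠ 0) :
    (∀ B C : Matrix (Fin n) (Fin n) ℂ,
        Matrix.hadamard A (B * C) = Matrix.hadamard A B * Matrix.hadamard A C) ↔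
      ((∀ i, A i i = 1) ∧ ∀ i j k, A i j = A i k * A k j) := by
  constructor
  · intro h
    have key : ∀ i j k, A i j = A i k * A k j := by
      intro i j k
      have h2 := congrFun (congrFun (h (single i k 1) (single k j 1)) i) j
      simpa [Matrix.hadamard_apply, Matrix.mul_apply, Matrix.single,
        ite_and, mul_comm] using h2
    refine ⟨?_, key⟩
    obtain ⟨p, q, hpq⟩ : ∃ p q, A p q ≠ 0 := by
      by_contra hc
      push_neg at hc
      exact hA (by ext i j; simp [hc])
    intro i
    have h1 : A p q = A p i * A i q := key p q i
    have hpi : A p i ≠ 0 := fun h0 => hpq (by rw [h1, h0, zero_mul])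
    have h2 : A p i = A p i * A i i := key p i i
    have := mul_left_cancel₀ hpi (h2.symm.trans (mul_one (A p i)).symm)
    exact this
  · rintro ⟨hd, hc⟩ B C
    ext i j
    simp only [Matrix.hadamard_apply, Matrix.mul_apply, Finset.mul_sum]
    refine Finset.sum_congr rfl fun k _ => ?_
    rw [hc i j k]
    ring
end

section
/- Let n be a positive integer and let A ∈ M_n(ℂ) be a nonzero matrix such that the Schur map S_A is multiplicative. Then S_A is spectrum preserving: for every B ∈ M_n(ℂ), the spectrum of A ∘ B equals the spectrum of B. -/
open Matrix

theorem schur_multiplicative_spectrum_preserving (n : ℕ) (hn : 0 < n)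
    (A : Matrix (Fin n) (Fin n) ℂ) (hA : A ≠ 0)
    (hmul : ∀ B C : Matrix (Fin n) (Fin n) ℂ,
      Matrix.hadamard A (B * C) = Matrix.hadamard A B * Matrix.hadamard A C) :
    ∀ B : Matrix (Fin n) (Fin n) ℂ,
      spectrum ℂ (Matrix.hadamard A B) = spectrum ℂ B := by
  -- Key relation: A i j = A i k * A k j for all i j k
  have key : ∀ i j k, A i j = A i k * A k j := by
    intro i j k
    have h := congrFun (congrFun (hmul (single i k 1) (single k j 1)) i) j
    rw [single_mul_single_same, one_mul] at h
    simp only [hadamard_apply, Matrix.mul_apply, single, of_apply, one_mul,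
      mul_ite, mul_one, mul_zero, ite_mul, zero_mul, ite_and] at h
    rw [Finset.sum_eq_single k] at h
    · simpa using h
    · intro b _ hb
      simp [hb.symm]
    · simp
  -- find a nonzero entry
  obtain ⟨p, q, hpq⟩ : ∃ p q, A p q ≠ 0 := by
    by_contra h
    push_neg at h
    exact hA (by ext i j; simpa using h i j)
  set d : Fin n → ℂ := fun i => A i q with hd
  have hdq : ∀ i, d i ≠ 0 := by
    intro i hi
    have hzero : A i q = 0 := hi
    apply hpq
    rw [key p q i, hzero, mul_zero]
  have hAij : ∀ i j, A i j = d i * (d j)⁻¹ := by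
    intro i j
    have h1 := key i q j  -- A i q = A i j * A j q
    field_simp [hdq j]
    linear_combination -h1
  intro B
  set u : (Matrix (Fin n) (Fin n) ℂ)ˣ :=
    ⟨diagonal d, diagonal (fun i => (d i)⁻¹),
      by rw [diagonal_mul_diagonal]; simp [mul_inv_cancel₀, hdq],
      by rw [diagonal_mul_diagonal]; simp [inv_mul_cancel₀, hdq]⟩ with hu
  have hconj : Matrix.hadamard A B = u.val * B * u.inv := by
    ext i j
    simp only [hu]
    rw [Matrix.mul_apply]
    simp only [mul_diagonal, diagonal_mul, hadamard_apply]
    rw [Finset.sum_eq_single j]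
    · rw [hAij, diagonal_apply_eq]; ring
    · intro b _ hb; simp [diagonal_apply_ne _ hb]
    · simp
  rw [hconj]
  exact spectrum.units_conjugate
end

section
/- Let n be a positive integer and let A ∈ M_n(ℂ) be a nonzero matrix such that the Schur map S_A is multiplicative. Then all diagonal entries of A equal 1 and the characteristic polynomial of A is X^{n-1}·(X − n); in particular the eigenvalues of A are 0 with algebraic multiplicity n−1 and n with algebraic multiplicity 1. -/
open Matrix Polynomial

private lemma schur_roots_struct (n : ℕ) (hn : 0 < n) (r : Multiset ℂ)
    (hmem : ∀ μ ∈ r, μ = 0 ∨ μ = (n : ℂ))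
    (hcard : Multiset.card r = n) (hsum : r.sum = (n : ℂ)) :
    r = Multiset.replicate (n - 1) 0 + {(n : ℂ)} := by
  have hn0 : (n : ℂ) ≠ 0 := Nat.cast_ne_zero.2 hn.ne'
  classical
  have hsplit : r.filter (· = 0) + r.filter (¬ · = 0) = r := Multiset.filter_add_not _ _
  have hz : r.filter (· = 0) = Multiset.replicate (Multiset.card (r.filter (· = 0))) 0 :=
    (Multiset.eq_replicate_card).2 fun b hb => (Multiset.mem_filter.1 hb).2
  have hnz : r.filter (¬ · = 0) = Multiset.replicate (Multiset.card (r.filter (¬ · = 0))) (n : ℂ) :=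
    (Multiset.eq_replicate_card).2 fun b hb => by
      have h := Multiset.mem_filter.1 hb
      rcases hmem b h.1 with h0 | h0
      · exact absurd h0 h.2
      · exact h0
  set a := Multiset.card (r.filter (· = 0))
  set b := Multiset.card (r.filter (¬ · = 0))
  have hab : a + b = n := by rw [← hcard, ← hsplit]; simp; rfl
  have hsum' : (b : ℂ) * n = n := by
    rw [← hsplit, Multiset.sum_add, hz, hnz, Multiset.sum_replicate, Multiset.sum_replicate] at hsum
    simpa [nsmul_eq_mul] using hsum
  have hb1 : b = 1 := by
    have : (b : ℂ) = 1 := by field_simp at hsum'; exact_mod_cast hsum'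
    exact_mod_cast this
  have ha : a = n - 1 := by omega
  rw [← hsplit, hz, hnz, ha, hb1]
  simp

private lemma schur_eval_charpoly (n : ℕ) (A : Matrix (Fin n) (Fin n) ℂ) (μ : ℂ) :
    A.charpoly.eval μ = (μ • (1 : Matrix (Fin n) (Fin n) ℂ) - A).det := by
  rw [Matrix.charpoly, ← Polynomial.coe_evalRingHom, RingHom.map_det]
  congr 1
  ext i j
  by_cases h : i = j <;>
    simp [h, charmatrix_apply_eq, charmatrix_apply_ne, Matrix.one_apply, Matrix.smul_apply,
      Matrix.sub_apply]

theorem schur_multiplicative_charpoly (n : ℕ) (hn : 0 < n)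
    (A : Matrix (Fin n) (Fin n) ℂ) (hA : A ≠ 0)
    (hmul : ∀ B C : Matrix (Fin n) (Fin n) ℂ,
      Matrix.hadamard A (B * C) = Matrix.hadamard A B * Matrix.hadamard A C) :
    (∀ i, A i i = 1) ∧
      A.charpoly = X ^ (n - 1) * (X - C (n : ℂ)) ∧
      A.charpoly.rootMultiplicity 0 = n - 1 ∧
      A.charpoly.rootMultiplicity (n : ℂ) = 1 := by
  have hn0 : (n : ℂ) ≠ 0 := Nat.cast_ne_zero.2 hn.ne'
  -- Key entrywise relation
  have key : ∀ i j k, A i j = A i k * A k j := by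
    intro i j k
    have h := congrFun (congrFun (hmul (single i k 1) (single k j 1)) i) j
    simp [Matrix.hadamard, Matrix.mul_apply, Matrix.single, Finset.sum_ite_eq,
      Finset.mul_sum, mul_ite, ite_and] at h
    simpa using h
  -- some nonzero entry
  obtain ⟨p, q, hpq⟩ : ∃ i j, A i j ≠ 0 := by
    by_contra h
    push_neg at h
    exact hA (by ext i j; simpa using h i j)
  have hpp : A p p = 1 := by
    have h := key p q p
    have h' : A p p * A p q = 1 * A p q := by rw [← h, one_mul]
    exact mul_right_cancel₀ hpq h'
  have hdiag : ∀ i, A i i = 1 := by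
    intro i
    have h1 : A p i * A i p = 1 := by rw [← key p p i, hpp]
    have h2 : A i i ≠ 0 := by
      rw [key i i p]
      intro h
      rcases mul_eq_zero.1 h with h' | h' <;>
        simp [h', mul_comm] at h1
    have h4 : A i i * A i i = A i i * 1 := by rw [← key i i i, mul_one]
    exact mul_left_cancel₀ h2 h4
  -- A² = n A
  have hsq : A * A = (n : ℂ) • A := by
    ext i j
    have : ∀ k ∈ Finset.univ, A i k * A k j = A i j := fun k _ => (key i j k).symm
    rw [Matrix.mul_apply, Finset.sum_congr rfl this, Finset.sum_const, Finset.card_univ,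
      Fintype.card_fin]
    simp [nsmul_eq_mul]
  -- trace
  have htrace : A.trace = (n : ℂ) := by
    simp [Matrix.trace, Matrix.diag, hdiag]
  -- charpoly roots
  have hspl : A.charpoly.Splits := IsAlgClosed.splits _
  have hroot : ∀ μ ∈ A.charpoly.roots, μ = 0 ∨ μ = (n : ℂ) := by
    intro μ hμ
    have h0 : (μ • (1 : Matrix (Fin n) (Fin n) ℂ) - A).det = 0 := by
      rw [← schur_eval_charpoly]
      exact isRoot_of_mem_roots hμ
    obtain ⟨v, hv, hAv⟩ := (Matrix.exists_mulVec_eq_zero_iff).2 h0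
    have hAv' : A *ᵥ v = μ • v := by
      rw [sub_mulVec, sub_eq_zero, smul_mulVec, one_mulVec] at hAv
      exact hAv.symm
    have h2 : (μ * μ) • v = ((n : ℂ) * μ) • v := by
      have h : (A * A) *ᵥ v = ((n : ℂ) • A) *ᵥ v := by rw [hsq]
      rw [← Matrix.mulVec_mulVec, hAv', Matrix.mulVec_smul, hAv', smul_smul,
        smul_mulVec, hAv', smul_smul] at h
      exact h
    have h3 : μ * μ = (n : ℂ) * μ := smul_left_injective ℂ hv h2
    have h4 : μ * (μ - (n : ℂ)) = 0 := by linear_combination h3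
    rcases mul_eq_zero.1 h4 with h | h
    · exact Or.inl h
    · exact Or.inr (sub_eq_zero.1 h)
  have hcard : Multiset.card A.charpoly.roots = n := by
    rw [(Polynomial.splits_iff_card_roots).1 hspl, Matrix.charpoly_natDegree_eq_dim,
      Fintype.card_fin]
  have hsum : A.charpoly.roots.sum = (n : ℂ) := by
    rw [← Matrix.trace_eq_sum_roots_charpoly]
    exact htrace
  have hr : A.charpoly.roots = Multiset.replicate (n - 1) 0 + {(n : ℂ)} :=
    schur_roots_struct n hn _ hroot hcard hsum
  have hcp : A.charpoly = X ^ (n - 1) * (X - C (n : ℂ)) := by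
    have h := hspl.eq_prod_roots_of_monic A.charpoly_monic
    rw [hr] at h
    rw [h]
    simp [Multiset.map_replicate, Multiset.prod_replicate]
  refine ⟨hdiag, hcp, ?_, ?_⟩
  · rw [← Polynomial.count_roots, hr]
    simp [Multiset.count_replicate, Multiset.count_singleton, (Ne.symm hn0)]
  · rw [← Polynomial.count_roots, hr]
    simp [Multiset.count_replicate, Multiset.count_singleton, hn0]
    exact fun h => absurd h.symm hn0
end

section
/- Let n be a positive integer and let A ∈ M_n(ℂ) be a unital Schur matrix, i.e., all diagonal entries of A equal 1. Then the Schur map S_A is multiplicative if and only if there exists a function f : Fin n → ℂ with f(i) ≠ 0 for all i such that A_{ij} = f(i)/f(j) for all i, j. Moreover, in that case, for every B ∈ M_n(ℂ) one has A ∘ B = D B D^{-1}, where D is the invertible diagonal matrix with diagonal entries f(1), …, f(n). -/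
open Matrix

lemma had_std_aux (n : ℕ) (A : Matrix (Fin n) (Fin n) ℂ) (a b : Fin n) :
    Matrix.hadamard A (Matrix.single a b (1:ℂ)) =
      Matrix.single a b (A a b) := by
  ext i j
  simp only [Matrix.hadamard_apply, Matrix.single]
  by_cases h1 : a = i <;> by_cases h2 : b = j <;> simp [h1, h2]

lemma schur_key (n : ℕ) (A : Matrix (Fin n) (Fin n) ℂ)
    (h : ∀ B C : Matrix (Fin n) (Fin n) ℂ,
        Matrix.hadamard A (B * C) = Matrix.hadamard A B * Matrix.hadamard A C)
    (i j k : Fin n) : A i j = A i k * A k j := by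
  have := h (Matrix.single i k 1) (Matrix.single k j 1)
  rw [Matrix.single_mul_single_same, one_mul, had_std_aux, had_std_aux, had_std_aux,
    Matrix.single_mul_single_same] at this
  have := congrFun (congrFun this i) j
  simpa using this

theorem unital_schur_multiplicative_iff_ratio (n : ℕ) (hn : 0 < n)
    (A : Matrix (Fin n) (Fin n) ℂ) (hdiag : ∀ i, A i i = 1) :
    ((∀ B C : Matrix (Fin n) (Fin n) ℂ,
        Matrix.hadamard A (B * C) = Matrix.hadamard A B * Matrix.hadamard A C) ↔
      ∃ f : Fin n → ℂ, (∀ i, f i ≠ 0) ∧ ∀ i j, A i j = f i / f j) ∧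
    ((∀ B C : Matrix (Fin n) (Fin n) ℂ,
        Matrix.hadamard A (B * C) = Matrix.hadamard A B * Matrix.hadamard A C) →
      ∃ f : Fin n → ℂ, (∀ i, f i ≠ 0) ∧ (∀ i j, A i j = f i / f j) ∧
        IsUnit (Matrix.diagonal f) ∧
        ∀ B : Matrix (Fin n) (Fin n) ℂ,
          Matrix.hadamard A B = Matrix.diagonal f * B * (Matrix.diagonal f)⁻¹) := by
  set z : Fin n := ⟨0, hn⟩
  have fwd : (∀ B C : Matrix (Fin n) (Fin n) ℂ,
        Matrix.hadamard A (B * C) = Matrix.hadamard A B * Matrix.hadamard A C) →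
      ∃ f : Fin n → ℂ, (∀ i, f i ≠ 0) ∧ ∀ i j, A i j = f i / f j := by
    intro h
    refine ⟨fun i => A i z, ?_, ?_⟩
    · intro i hi
      have h1 := schur_key n A h i i z
      rw [hdiag, show A i z = 0 from hi, zero_mul] at h1
      exact one_ne_zero h1
    · intro i j
      simp only
      have h1 : A i j = A i z * A z j := schur_key n A h i j z
      have h2 : A j z * A z j = 1 := by rw [← schur_key n A h j j z, hdiag]
      have hjz : A j z ≠ 0 := by
        intro hj; rw [hj, zero_mul] at h2; exact one_ne_zero h2.symm
      field_simp
      rw [h1]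
      linear_combination A i z * h2
  have bwd : (∃ f : Fin n → ℂ, (∀ i, f i ≠ 0) ∧ ∀ i j, A i j = f i / f j) →
      (∀ B C : Matrix (Fin n) (Fin n) ℂ,
        Matrix.hadamard A (B * C) = Matrix.hadamard A B * Matrix.hadamard A C) := by
    rintro ⟨f, hf, hA⟩ B C
    ext i j
    simp only [Matrix.hadamard_apply, Matrix.mul_apply, Finset.mul_sum]
    refine Finset.sum_congr rfl fun k _ => ?_
    have hk := hf k; have hi := hf i; have hj := hf j
    rw [hA i j, hA i k, hA k j]
    field_simp
  refine ⟨⟨fwd, bwd⟩, fun h => ?_⟩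
  obtain ⟨f, hf, hA⟩ := fwd h
  have hmul1 : Matrix.diagonal f * Matrix.diagonal (fun i => (f i)⁻¹) = 1 := by
    rw [Matrix.diagonal_mul_diagonal,
      show (fun i => f i * (f i)⁻¹) = fun _ : Fin n => (1:ℂ) from
        funext fun i => mul_inv_cancel₀ (hf i)]
    exact Matrix.diagonal_one
  have hunit : IsUnit (Matrix.diagonal f) := by
    rw [Matrix.isUnit_iff_isUnit_det]
    apply IsUnit.of_mul_eq_one (Matrix.diagonal fun i => (f i)⁻¹).det
    rw [← Matrix.det_mul, hmul1, Matrix.det_one]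
  have hinv : (Matrix.diagonal f)⁻¹ = Matrix.diagonal (fun i => (f i)⁻¹) :=
    Matrix.inv_eq_right_inv hmul1
  refine ⟨f, hf, hA, hunit, fun B => ?_⟩
  rw [hinv]
  ext i j
  simp only [Matrix.hadamard_apply, Matrix.mul_diagonal, Matrix.diagonal_mul]
  rw [hA i j]
  have hj := hf j
  field_simp
end

section
/- Let n be a positive integer and let A ∈ M_n(ℂ) be a nonzero matrix such that the Schur map S_A is multiplicative. Then A_{ij} · A_{ji} = 1 for all i, j (equivalently, the conjugate transpose of A equals the entrywise complex conjugate of the entrywise inverse of A), and A is diagonalizable: there exist an invertible matrix P and a diagonal matrix D with A = P D P^{-1}. -/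
open Matrix

theorem schur_multiplicative_entrywise_inverse_and_diagonalizable (n : ℕ) (hn : 0 < n)
    (A : Matrix (Fin n) (Fin n) ℂ) (hA : A ≠ 0)
    (hmul : ∀ B C : Matrix (Fin n) (Fin n) ℂ,
      Matrix.hadamard A (B * C) = Matrix.hadamard A B * Matrix.hadamard A C) :
    (∀ i j, A i j * A j i = 1) ∧
      (Aᴴ = Matrix.of fun i j => star ((A i j)⁻¹)) ∧
      ∃ (P : Matrix (Fin n) (Fin n) ℂ) (d : Fin n → ℂ),
        IsUnit P ∧ A = P * Matrix.diagonal d * P⁻¹ := by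
  have key : ∀ i j k, A i j = A i k * A k j := by
    intro i j k
    have h := congrFun (congrFun (hmul (Matrix.single i k 1) (Matrix.single k j 1)) i) j
    simp [Matrix.hadamard, Matrix.mul_apply, Matrix.single, Finset.sum_ite_eq,
      Finset.mul_sum, mul_ite, ite_and] at h
    exact h
  obtain ⟨p, q, hpq⟩ : ∃ p q, A p q ≠ 0 := by
    by_contra h
    push_neg at h
    exact hA (by ext i j; simpa using h i j)
  have hpp : A p p = 1 := by
    have h0 : (A p p - 1) * A p q = 0 := by linear_combination -(key p q p)
    rcases mul_eq_zero.mp h0 with h | h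
    · exact sub_eq_zero.mp h
    · exact absurd h hpq
  have hdiag : ∀ i, A i i = 1 := by
    intro i
    rw [key i i p, mul_comm, ← key p p i, hpp]
  have h1 : ∀ i j, A i j * A j i = 1 := by
    intro i j
    rw [← key i i j, hdiag]
  have hne : ∀ i j, A i j ≠ 0 := fun i j h => by
    have := h1 i j; rw [h, zero_mul] at this; exact one_ne_zero this.symm
  have hinv : ∀ i j, A j i = (A i j)⁻¹ := fun i j =>
    eq_inv_of_mul_eq_one_right (h1 i j)
  refine ⟨h1, ?_, ?_⟩
  · ext i j
    simp [Matrix.conjTranspose_apply, hinv i j]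
  · set u : Fin n → ℂ := fun i => A i p with hu
    have hAeq : A = Matrix.diagonal u * (Matrix.of fun _ _ => (1 : ℂ)) * Matrix.diagonal (fun i => (u i)⁻¹) := by
      ext i j
      simp [Matrix.mul_apply, Matrix.diagonal, Finset.sum_ite_eq, hu]
      rw [key i j p, hinv j p]
    have hJ : (Matrix.of fun _ _ => (1 : ℂ) : Matrix (Fin n) (Fin n) ℂ).IsHermitian := by
      ext i j; simp [Matrix.conjTranspose_apply]
    obtain ⟨U, D, hU1, hU2, hJdecomp⟩ :
        ∃ (U : Matrix (Fin n) (Fin n) ℂ) (D : Fin n → ℂ), U * star U = 1 ∧ star U * U = 1 ∧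
          (Matrix.of fun _ _ => (1 : ℂ) : Matrix (Fin n) (Fin n) ℂ) = U * Matrix.diagonal D * star U := by
      refine ⟨hJ.eigenvectorUnitary, RCLike.ofReal ∘ hJ.eigenvalues, ?_, ?_, hJ.spectral_theorem⟩
      · exact (Matrix.mem_unitaryGroup_iff).mp hJ.eigenvectorUnitary.2
      · exact (Matrix.mem_unitaryGroup_iff').mp hJ.eigenvectorUnitary.2
    have hdd : Matrix.diagonal u * Matrix.diagonal (fun i => (u i)⁻¹) = 1 := by
      rw [Matrix.diagonal_mul_diagonal]
      convert Matrix.diagonal_one using 2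
      ext i
      exact mul_inv_cancel₀ (hne i p)
    have hone : (Matrix.diagonal u * U) * (star U * Matrix.diagonal fun i => (u i)⁻¹) = 1 := by
      rw [Matrix.mul_assoc, ← Matrix.mul_assoc U, hU1, Matrix.one_mul, hdd]
    refine ⟨Matrix.diagonal u * U, D, ?_, ?_⟩
    · exact ⟨⟨_, _, hone, mul_eq_one_comm.mp hone⟩, rfl⟩
    · have hPinv : (Matrix.diagonal u * U)⁻¹ = star U * Matrix.diagonal (fun i => (u i)⁻¹) :=
        Matrix.inv_eq_right_inv hone
      rw [hPinv, hAeq, hJdecomp]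
      simp only [Matrix.mul_assoc]
end

section
/- Let n be a positive integer and let A ∈ M_n(ℂ) be a nonzero matrix such that the Schur map S_A is multiplicative. Then ‖A‖ ≥ n, where ‖·‖ is the operator norm on M_n(ℂ) induced by the Euclidean norm on ℂ^n (the spectral norm). If moreover A is Hermitian (A = A*), then ‖A‖ = n. -/
open Matrix

theorem schur_multiplicative_norm_ge (n : ℕ) (hn : 0 < n)
    (A : Matrix (Fin n) (Fin n) ℂ) (hA : A ≠ 0)
    (hmul : ∀ B C : Matrix (Fin n) (Fin n) ℂ,
      Matrix.hadamard A (B * C) = Matrix.hadamard A B * Matrix.hadamard A C) :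
    (n : ℝ) ≤ ‖Matrix.toEuclideanCLM (𝕜 := ℂ) A‖ ∧
      (Aᴴ = A → ‖Matrix.toEuclideanCLM (𝕜 := ℂ) A‖ = n) := by
  set T := Matrix.toEuclideanCLM (𝕜 := ℂ) A with hT
  have key : ∀ i k j, A i j = A i k * A k j := by
    intro i k j
    have h := congrFun (congrFun (hmul (single i k 1) (single k j 1)) i) j
    rw [single_mul_single_same] at h
    simp only [hadamard_apply, Matrix.mul_apply, single] at h
    simpa using h
  obtain ⟨p, q, hpq⟩ : ∃ p q, A p q ≠ 0 := by
    by_contra h; push_neg at h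
    exact hA (by ext i j; simpa using h i j)
  have hcolq : ∀ i, A i q ≠ 0 := fun i h => hpq (by rw [key p i q, h, mul_zero])
  have hne : ∀ i j, A i j ≠ 0 := fun i j h => hcolq i (by rw [key i j q, h, zero_mul])
  have hdiag : ∀ i, A i i = 1 := by
    intro i
    have h := key i i i
    have h' : A i i * 1 = A i i * A i i := by rw [mul_one]; exact h
    exact (mul_left_cancel₀ (hne i i) h').symm
  set q0 : Fin n := ⟨0, hn⟩ with hq0
  have hfac : ∀ i j, A i j = A i q0 * A q0 j := fun i j => key i q0 j
  have huv : ∀ i, A i q0 * A q0 i = 1 := fun i => (key i q0 i).symm.trans (hdiag i)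
  set a : ℝ := Real.sqrt (∑ i, ‖A i q0‖ ^ 2) with ha
  set b : ℝ := Real.sqrt (∑ j, ‖A q0 j‖ ^ 2) with hb
  have ha0 : 0 ≤ a := Real.sqrt_nonneg _
  have hb0 : 0 ≤ b := Real.sqrt_nonneg _
  have hsa : a ^ 2 = ∑ i, ‖A i q0‖ ^ 2 := Real.sq_sqrt (Finset.sum_nonneg fun _ _ => sq_nonneg _)
  have hsb : b ^ 2 = ∑ j, ‖A q0 j‖ ^ 2 := Real.sq_sqrt (Finset.sum_nonneg fun _ _ => sq_nonneg _)
  have hbpos : 0 < b := by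
    rw [hb]
    apply Real.sqrt_pos.2
    apply Finset.sum_pos (fun j _ => pow_pos (norm_pos_iff.2 (hne q0 j)) 2) ⟨q0, Finset.mem_univ _⟩
  have hTapp : ∀ (x : EuclideanSpace ℂ (Fin n)) (i : Fin n),
      T x i = A i q0 * ∑ j, A q0 j * x j := by
    intro x i
    have h := congrFun (ofLp_toEuclideanCLM (𝕜 := ℂ) A x) i
    have h2 : T x i = ∑ j, A i j * x j := by
      exact h
    rw [h2, Finset.mul_sum]
    exact Finset.sum_congr rfl fun j _ => by rw [hfac i j, mul_assoc]
  have hnormTx : ∀ x : EuclideanSpace ℂ (Fin n),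
      ‖T x‖ = a * ‖∑ j, A q0 j * x j‖ := by
    intro x
    rw [EuclideanSpace.norm_eq]
    have hsum : (∑ i, ‖T x i‖ ^ 2) = (∑ i, ‖A i q0‖ ^ 2) * ‖∑ j, A q0 j * x j‖ ^ 2 := by
      rw [Finset.sum_mul]
      exact Finset.sum_congr rfl fun i _ => by rw [hTapp x i, norm_mul, mul_pow]
    rw [hsum, Real.sqrt_mul (Finset.sum_nonneg fun _ _ => sq_nonneg _),
      Real.sqrt_sq (norm_nonneg _)]
  set Vc : EuclideanSpace ℂ (Fin n) :=
    (WithLp.equiv 2 (Fin n → ℂ)).symm (fun j => star (A q0 j)) with hVcdef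
  have hVc : ‖Vc‖ = b := by
    rw [EuclideanSpace.norm_eq, hb]
    congr 1
    exact Finset.sum_congr rfl fun j _ => by simp [hVcdef]
  have hinner : ∀ x : EuclideanSpace ℂ (Fin n),
      (∑ j, A q0 j * x j) = inner (𝕜 := ℂ) Vc x := by
    intro x
    rw [PiLp.inner_apply]
    exact Finset.sum_congr rfl fun j _ => by simp [hVcdef, RCLike.inner_apply, mul_comm]
  have hub : ‖T‖ ≤ a * b := by
    apply ContinuousLinearMap.opNorm_le_bound _ (mul_nonneg ha0 hb0)
    intro x
    rw [hnormTx, mul_assoc]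
    refine mul_le_mul_of_nonneg_left ?_ ha0
    rw [hinner, ← hVc]
    exact norm_inner_le_norm _ _
  have hTVc : ‖T Vc‖ = a * b ^ 2 := by
    rw [hnormTx]
    congr 1
    have : (∑ j, A q0 j * Vc j) = ((b ^ 2 : ℝ) : ℂ) := by
      rw [hsb]
      push_cast
      exact Finset.sum_congr rfl fun j _ => by
        simp [hVcdef, Complex.mul_conj', Complex.sq_norm]
    rw [this]
    simp [sq_nonneg b, abs_of_nonneg]
  have hlb : a * b ≤ ‖T‖ := by
    have h := T.le_opNorm Vc
    rw [hTVc, hVc] at h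
    have := (mul_le_mul_iff_of_pos_right hbpos).1 (by linarith [h] : (a * b) * b ≤ ‖T‖ * b)
    exact this
  have nab : (n : ℝ) ≤ a * b := by
    have hcs := Finset.sum_mul_sq_le_sq_mul_sq Finset.univ
      (fun i => ‖A i q0‖) (fun i => ‖A q0 i‖)
    have hone : (∑ i, ‖A i q0‖ * ‖A q0 i‖) = (n : ℝ) := by
      rw [Finset.sum_congr rfl fun i _ => by rw [← norm_mul, huv i, norm_one]]
      simp
    rw [hone, ← hsa, ← hsb] at hcs
    nlinarith [mul_nonneg ha0 hb0]
  refine ⟨nab.trans hlb, fun hherm => ?_⟩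
  have hmod : ∀ i j, ‖A i j‖ = 1 := by
    intro i j
    have h1 : A j i = starRingEnd ℂ (A i j) := by
      have h := congrFun (congrFun hherm j) i
      simpa [conjTranspose_apply] using h.symm
    have h2 : A i j * starRingEnd ℂ (A i j) = 1 := by
      rw [← h1, ← key i j i, hdiag i]
    have h4 := congrArg (‖·‖) h2
    simp only [_root_.map_mul, norm_one, Complex.norm_conj, norm_mul] at h4
    have h3 : ‖A i j‖ * ‖A i j‖ = 1 := by simpa using h4
    nlinarith [norm_nonneg (A i j)]
  have hasq : a = Real.sqrt n := by
    rw [ha]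
    congr 1
    rw [Finset.sum_congr rfl fun i _ => by rw [hmod i q0, one_pow]]
    simp
  have hbsq : b = Real.sqrt n := by
    rw [hb]
    congr 1
    rw [Finset.sum_congr rfl fun j _ => by rw [hmod q0 j, one_pow]]
    simp
  have hab : a * b = n := by
    rw [hasq, hbsq, Real.mul_self_sqrt (Nat.cast_nonneg n)]
  exact le_antisymm (hub.trans_eq hab) (nab.trans hlb)
end

section
/- Let n be a positive integer and let A ∈ M_n(ℂ) be a nonzero Hermitian matrix (A = A*) such that the Schur map S_A is multiplicative. Then there exists a diagonal unitary matrix U ∈ M_n(ℂ) such that A ∘ B = U B U* for every B ∈ M_n(ℂ). -/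
open Matrix

theorem schur_multiplicative_hermitian_unitary_conjugation (n : ℕ) (hn : 0 < n)
    (A : Matrix (Fin n) (Fin n) ℂ) (hA : A ≠ 0) (hherm : Aᴴ = A)
    (hmul : ∀ B C : Matrix (Fin n) (Fin n) ℂ,
      Matrix.hadamard A (B * C) = Matrix.hadamard A B * Matrix.hadamard A C) :
    ∃ U : Matrix (Fin n) (Fin n) ℂ,
      U ∈ Matrix.unitaryGroup (Fin n) ℂ ∧ U.IsDiag ∧
      ∀ B : Matrix (Fin n) (Fin n) ℂ, Matrix.hadamard A B = U * B * Uᴴ := by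
  have key : ∀ i k j, A i j = A i k * A k j := by
    intro i k j
    have h := congrFun (congrFun (hmul (Matrix.single i k 1) (Matrix.single k j 1)) i) j
    simpa [hadamard, mul_apply, Matrix.single, Finset.sum_ite_eq, ite_and] using h
  have hconj : ∀ i j, A j i = starRingEnd ℂ (A i j) := by
    intro i j
    have := congrFun (congrFun hherm j) i
    simpa [conjTranspose_apply] using this.symm
  -- find a nonzero entry
  obtain ⟨i0, j0, h0⟩ : ∃ i j, A i j ≠ 0 := by
    by_contra h
    push_neg at h
    exact hA (by ext i j; simp [h])
  have hii0 : A i0 i0 = 1 := by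
    have h := key i0 i0 j0
    exact mul_right_cancel₀ h0 (h.symm.trans (one_mul _).symm)
  -- every diagonal entry is 1
  have hdiag : ∀ k, A k k = 1 := by
    intro k
    have h1 : A i0 k * A k i0 = 1 := by rw [← key i0 k i0, hii0]
    have h2 : A k i0 ≠ 0 := right_ne_zero_of_mul (h1 ▸ one_ne_zero)
    have h3 := key k k i0
    exact mul_right_cancel₀ h2 (h3.symm.trans (one_mul (A k i0)).symm)
  set u : Fin n → ℂ := fun k => A k i0 with hu
  have hunorm : ∀ k, u k * starRingEnd ℂ (u k) = 1 := by
    intro k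
    have h1 : A k i0 * A i0 k = 1 := by rw [← key k i0 k, hdiag k]
    rw [hu]; simpa [← hconj] using h1
  have hAeq : ∀ i j, A i j = u i * starRingEnd ℂ (u j) := by
    intro i j
    rw [key i i0 j, hu]
    simp [hconj i0 j]
  refine ⟨Matrix.diagonal u, ?_, Matrix.isDiag_diagonal u, ?_⟩
  · rw [Matrix.mem_unitaryGroup_iff]
    ext i j
    rw [Matrix.star_eq_conjTranspose, diagonal_conjTranspose, diagonal_mul_diagonal]
    by_cases h : i = j
    · subst h
      simp [Matrix.diagonal_apply_eq, Matrix.one_apply_eq, Pi.star_apply]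
      simpa using hunorm i
    · simp [Matrix.diagonal_apply_ne _ h, Matrix.one_apply_ne h]
  · intro B
    ext i j
    rw [diagonal_conjTranspose]
    simp [hadamard, mul_apply, Matrix.diagonal_apply, Finset.sum_ite_eq, hAeq i j, Pi.star_apply]
    ring
end

section
/- Let n be a positive integer and let A ∈ M_n(ℂ) have all diagonal entries equal to 1. Then the Schur map S_A is multiplicative and *-preserving (i.e., S_A(B*) = S_A(B)* for all B, equivalently A is Hermitian) if and only if A has rank one and every entry of A has modulus 1. -/
open Matrix

lemma schur_aux_rank_one {n : ℕ} (hn : 0 < n) (A : Matrix (Fin n) (Fin n) ℂ)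
    (hdiag : ∀ i, A i i = 1) (hrel : ∀ i j k, A i j * A j k = A i k) :
    A.rank = 1 := by
  set z : Fin n := ⟨0, hn⟩
  have hz : Aᵀ z ≠ 0 := by
    intro h
    have := congrFun h z
    simp [Matrix.transpose_apply, hdiag z] at this
  rw [Matrix.rank_eq_finrank_span_cols]
  have hspan : Submodule.span ℂ (Set.range Aᵀ) = Submodule.span ℂ {Aᵀ z} := by
    apply le_antisymm
    · rw [Submodule.span_le]
      rintro _ ⟨j, rfl⟩
      rw [SetLike.mem_coe, Submodule.mem_span_singleton]
      exact ⟨A z j, by ext i; simp [Matrix.transpose_apply, mul_comm, hrel i z j]⟩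
    · exact Submodule.span_mono (Set.singleton_subset_iff.mpr ⟨z, rfl⟩)
  change Module.finrank ℂ (Submodule.span ℂ (Set.range Aᵀ)) = 1
  rw [hspan]
  exact finrank_span_singleton hz

theorem schur_mult_star_preserving_iff_rank_one_unimodular (n : ℕ) (hn : 0 < n)
    (A : Matrix (Fin n) (Fin n) ℂ) (hdiag : ∀ i, A i i = 1) :
    ((∀ B C : Matrix (Fin n) (Fin n) ℂ,
        Matrix.hadamard A (B * C) = Matrix.hadamard A B * Matrix.hadamard A C) ∧
      (∀ B : Matrix (Fin n) (Fin n) ℂ,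
        Matrix.hadamard A Bᴴ = (Matrix.hadamard A B)ᴴ)) ↔
    (A.rank = 1 ∧ ∀ i j, ‖A i j‖ = 1) := by
  constructor
  · rintro ⟨hmul, hstar⟩
    have hrel : ∀ i j k, A i j * A j k = A i k := by
      intro i j k
      have h := congrFun (congrFun
        (hmul (Matrix.single i j 1) (Matrix.single j k 1)) i) k
      simpa [Matrix.hadamard_apply, Matrix.single_mul_single_same, Matrix.mul_apply,
        Matrix.single, ite_and, Finset.sum_ite_eq, mul_comm, mul_left_comm] using h.symm
    have hherm : ∀ i j, A j i = starRingEnd ℂ (A i j) := by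
      intro i j
      have h := congrFun (congrFun (hstar (Matrix.single i j 1)) j) i
      simpa [Matrix.hadamard_apply, Matrix.conjTranspose_apply, Matrix.single]
        using h
    have habs : ∀ i j, ‖A i j‖ = 1 := by
      intro i j
      have h1 : A i j * starRingEnd ℂ (A i j) = 1 := by
        rw [← hherm i j, hrel i j i, hdiag i]
      have := congrArg norm h1
      rw [norm_mul, Complex.norm_conj, norm_one] at this
      nlinarith [norm_nonneg (A i j), this]
    exact ⟨schur_aux_rank_one hn A hdiag hrel, habs⟩
  · rintro ⟨hrank, habs⟩
    have hne : ∀ i j, A i j ≠ 0 := fun i j h => by have := habs i j; rw [h] at this; simp at this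
    -- columns
    have hrel : ∀ i j k, A i j * A j k = A i k := by
      intro i j k
      have hWfin : FiniteDimensional ℂ (Submodule.span ℂ (Set.range Aᵀ)) := inferInstance
      have hj : Aᵀ j ≠ 0 := by
        intro h
        exact hne j j (by simpa using congrFun h j)
      have hle : Submodule.span ℂ {Aᵀ j} ≤ Submodule.span ℂ (Set.range Aᵀ) :=
        Submodule.span_mono (Set.singleton_subset_iff.mpr ⟨j, rfl⟩)
      have heq : Submodule.span ℂ {Aᵀ j} = Submodule.span ℂ (Set.range Aᵀ) := by
        apply Submodule.eq_of_le_of_finrank_eq hle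
        rw [finrank_span_singleton hj, ← hrank]
        exact Matrix.rank_eq_finrank_span_cols A
      have hk : Aᵀ k ∈ Submodule.span ℂ {Aᵀ j} := by
        rw [heq]; exact Submodule.subset_span (Set.mem_range_self k)
      obtain ⟨c, hc⟩ := Submodule.mem_span_singleton.mp hk
      have h1 : A i k = c * A i j := by
        have := congrFun hc i; simpa [Matrix.transpose_apply, eq_comm] using this
      have h2 : A j k = c := by
        have := congrFun hc j
        simpa [Matrix.transpose_apply, hdiag j, eq_comm] using this
      rw [h1, h2]; ring
    have hherm : ∀ i j, A j i = starRingEnd ℂ (A i j) := by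
      intro i j
      have h1 : A i j * A j i = 1 := by rw [hrel i j i, hdiag i]
      have h2 : A i j * starRingEnd ℂ (A i j) = 1 := by
        rw [Complex.mul_conj, ← Complex.sq_norm, habs i j]
        norm_num
      exact mul_left_cancel₀ (hne i j) (h1.trans h2.symm)
    constructor
    · intro B C
      ext i k
      rw [Matrix.hadamard_apply, Matrix.mul_apply, Matrix.mul_apply, Finset.mul_sum]
      apply Finset.sum_congr rfl
      intro j _
      rw [Matrix.hadamard_apply, Matrix.hadamard_apply]
      calc A i k * (B i j * C j k) = (A i j * A j k) * (B i j * C j k) := by rw [hrel]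
        _ = A i j * B i j * (A j k * C j k) := by ring
    · intro B
      ext i j
      rw [Matrix.hadamard_apply, Matrix.conjTranspose_apply, Matrix.conjTranspose_apply,
        Matrix.hadamard_apply, star_mul']
      rw [show (star (A j i) : ℂ) = (starRingEnd ℂ) (A j i) from rfl, ← hherm j i]
end

section
/- Let n be a positive integer and let A ∈ M_n(ℂ) be nonzero. Then S_A is multiplicative and *-preserving (S_A(B*) = S_A(B)* for all B) and all diagonal entries of A equal 1, if and only if all entries of A are nonzero, A is positive semidefinite, the entrywise inverse A^{[-1]} is positive semidefinite, and all diagonal entries of A equal 1. -/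
open Matrix Complex
open scoped ComplexOrder

private lemma quad2 {n : ℕ} (A : Matrix (Fin n) (Fin n) ℂ) (hA : A.PosSemidef)
    (i j : Fin n) (a b : ℂ) :
    0 ≤ (starRingEnd ℂ) a * A i i * a + (starRingEnd ℂ) a * A i j * b
      + (starRingEnd ℂ) b * A j i * a + (starRingEnd ℂ) b * A j j * b := by
  have h := hA.dotProduct_mulVec_nonneg (Pi.single i a + Pi.single j b)
  have e : star (Pi.single i a + Pi.single j b) ⬝ᵥ A *ᵥ (Pi.single i a + Pi.single j b)
      = (starRingEnd ℂ) a * A i i * a + (starRingEnd ℂ) a * A i j * b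
      + (starRingEnd ℂ) b * A j i * a + (starRingEnd ℂ) b * A j j * b := by
    simp [mulVec_add, mulVec_single, dotProduct_add, add_dotProduct, star_add,
      ← Pi.single_star, dotProduct_single, single_dotProduct]
    ring
  rw [e] at h; exact h

private lemma quad3 {n : ℕ} (A : Matrix (Fin n) (Fin n) ℂ) (hA : A.PosSemidef)
    (i j k : Fin n) (a b c : ℂ) :
    0 ≤ (starRingEnd ℂ) a * A i i * a + (starRingEnd ℂ) a * A i j * b + (starRingEnd ℂ) a * A i k * c
      + (starRingEnd ℂ) b * A j i * a + (starRingEnd ℂ) b * A j j * b + (starRingEnd ℂ) b * A j k * c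
      + (starRingEnd ℂ) c * A k i * a + (starRingEnd ℂ) c * A k j * b + (starRingEnd ℂ) c * A k k * c := by
  have h := hA.dotProduct_mulVec_nonneg (Pi.single i a + Pi.single j b + Pi.single k c)
  have e : star (Pi.single i a + Pi.single j b + Pi.single k c) ⬝ᵥ
        A *ᵥ (Pi.single i a + Pi.single j b + Pi.single k c)
      = (starRingEnd ℂ) a * A i i * a + (starRingEnd ℂ) a * A i j * b + (starRingEnd ℂ) a * A i k * c
      + (starRingEnd ℂ) b * A j i * a + (starRingEnd ℂ) b * A j j * b + (starRingEnd ℂ) b * A j k * c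
      + (starRingEnd ℂ) c * A k i * a + (starRingEnd ℂ) c * A k j * b + (starRingEnd ℂ) c * A k k * c := by
    simp [mulVec_add, mulVec_single, dotProduct_add, add_dotProduct, star_add,
      ← Pi.single_star, dotProduct_single, single_dotProduct]
    ring
  rw [e] at h; exact h

private lemma psd_rank1 {n : ℕ} (v : Fin n → ℂ) :
    (Matrix.of fun p q => v p * (starRingEnd ℂ) (v q) : Matrix (Fin n) (Fin n) ℂ).PosSemidef := by
  refine Matrix.PosSemidef.of_dotProduct_mulVec_nonneg ?_ ?_
  · ext p q
    simp [Matrix.conjTranspose_apply]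
    ring
  · intro x
    set s : ℂ := ∑ p, (starRingEnd ℂ) (x p) * v p with hs
    have e : star x ⬝ᵥ (Matrix.of fun p q => v p * (starRingEnd ℂ) (v q)) *ᵥ x
        = s * (starRingEnd ℂ) s := by
      simp only [dotProduct, mulVec, Pi.star_apply, RCLike.star_def, hs, map_sum,
        Complex.conj_conj, Finset.mul_sum, Finset.sum_mul, Matrix.of_apply]
      rw [Finset.sum_comm]
      refine Finset.sum_congr rfl fun p _ => Finset.sum_congr rfl fun q _ => ?_
      rw [RingHom.map_mul, Complex.conj_conj]
      ring
    rw [e, Complex.mul_conj]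
    exact_mod_cast Complex.normSq_nonneg s

theorem schur_mult_star_preserving_iff_posSemidef (n : ℕ) (hn : 0 < n)
    (A : Matrix (Fin n) (Fin n) ℂ) (hA : A ≠ 0) :
    ((∀ B C : Matrix (Fin n) (Fin n) ℂ,
        Matrix.hadamard A (B * C) = Matrix.hadamard A B * Matrix.hadamard A C) ∧
      (∀ B : Matrix (Fin n) (Fin n) ℂ,
        Matrix.hadamard A Bᴴ = (Matrix.hadamard A B)ᴴ) ∧
      (∀ i, A i i = 1)) ↔
    ((∀ i j, A i j ≠ 0) ∧ A.PosSemidef ∧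
      (Matrix.of fun i j => (A i j)⁻¹ : Matrix (Fin n) (Fin n) ℂ).PosSemidef ∧
      (∀ i, A i i = 1)) := by
  constructor
  · rintro ⟨hM, hS, hD⟩
    -- Hermitian entrywise
    have herm : ∀ p q, A q p = (starRingEnd ℂ) (A p q) := by
      intro p q
      have h := congrFun (congrFun (hS (Matrix.single p q 1)) q) p
      simpa [Matrix.hadamard, Matrix.conjTranspose_apply, Matrix.single] using h
    -- multiplicativity on entries
    have keyM : ∀ i j k, A i k = A i j * A j k := by
      intro i j k
      have h := congrFun (congrFun (hM (Matrix.single i j 1)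
        (Matrix.single j k 1)) i) k
      simpa [Matrix.hadamard, Matrix.mul_apply, Matrix.single, Finset.sum_ite_eq,
        Finset.mul_sum] using h
    have hmod : ∀ p q, A p q * (starRingEnd ℂ) (A p q) = 1 := by
      intro p q
      have := keyM p q p
      rw [hD p, herm p q] at this
      exact this.symm
    have hnz : ∀ p q, A p q ≠ 0 := fun p q => left_ne_zero_of_mul_eq_one (hmod p q)
    set j0 : Fin n := ⟨0, hn⟩
    set v : Fin n → ℂ := fun i => A i j0 with hv
    have hAv : ∀ p q, A p q = v p * (starRingEnd ℂ) (v q) := by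
      intro p q
      rw [keyM p j0 q, herm q j0]
    refine ⟨hnz, ?_, ?_, hD⟩
    · have : A = Matrix.of fun p q => v p * (starRingEnd ℂ) (v q) := by
        ext p q; exact hAv p q
      rw [this]; exact psd_rank1 v
    · have : (Matrix.of fun i j => (A i j)⁻¹ : Matrix (Fin n) (Fin n) ℂ)
          = Matrix.of fun p q => (starRingEnd ℂ) (v p) * (starRingEnd ℂ) ((starRingEnd ℂ) (v q)) := by
        ext p q
        rw [Matrix.of_apply, Matrix.of_apply, inv_eq_of_mul_eq_one_right (hmod p q), hAv p q]
        simp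
      rw [this]; exact psd_rank1 _
  · rintro ⟨hnz, hPSD, hInv, hD⟩
    have herm : ∀ p q, A q p = (starRingEnd ℂ) (A p q) := by
      intro p q
      have := congrFun (congrFun hPSD.1 q) p
      rw [Matrix.conjTranspose_apply] at this
      exact this.symm
    -- |A p q| ≤ 1
    have hle : ∀ p q, Complex.normSq (A p q) ≤ 1 := by
      intro p q
      have h := quad2 A hPSD p q 1 (-(starRingEnd ℂ) (A p q))
      have e : (starRingEnd ℂ) 1 * A p p * 1 + (starRingEnd ℂ) 1 * A p q * (-(starRingEnd ℂ) (A p q))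
          + (starRingEnd ℂ) (-(starRingEnd ℂ) (A p q)) * A q p * 1
          + (starRingEnd ℂ) (-(starRingEnd ℂ) (A p q)) * A q q * (-(starRingEnd ℂ) (A p q))
          = ((1 - Complex.normSq (A p q) : ℝ) : ℂ) := by
        rw [hD p, hD q, herm p q]
        push_cast
        rw [← Complex.mul_conj]
        simp
        ring
      rw [e] at h
      have := (Complex.zero_le_real).mp h
      linarith
    have hmod : ∀ p q, A p q * (starRingEnd ℂ) (A p q) = 1 := by
      intro p q
      have h2 : Complex.normSq ((A p q)⁻¹) ≤ 1 := by
        have h := quad2 _ hInv p q 1 (-(starRingEnd ℂ) ((A p q)⁻¹))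
        have hermI : (Matrix.of fun i j => (A i j)⁻¹ : Matrix (Fin n) (Fin n) ℂ) q p
            = (starRingEnd ℂ) ((Matrix.of fun i j => (A i j)⁻¹ : Matrix (Fin n) (Fin n) ℂ) p q) := by
          have := congrFun (congrFun hInv.1 q) p
          rw [Matrix.conjTranspose_apply] at this
          exact this.symm
        simp only [Matrix.of_apply] at h hermI
        have e : (starRingEnd ℂ) 1 * (A p p)⁻¹ * 1 + (starRingEnd ℂ) 1 * (A p q)⁻¹ * (-(starRingEnd ℂ) ((A p q)⁻¹))
            + (starRingEnd ℂ) (-(starRingEnd ℂ) ((A p q)⁻¹)) * (A q p)⁻¹ * 1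
            + (starRingEnd ℂ) (-(starRingEnd ℂ) ((A p q)⁻¹)) * (A q q)⁻¹ * (-(starRingEnd ℂ) ((A p q)⁻¹))
            = ((1 - Complex.normSq ((A p q)⁻¹) : ℝ) : ℂ) := by
          have hqp : (A q p)⁻¹ = (starRingEnd ℂ) ((A p q)⁻¹) := by
            rw [herm p q]; simp [map_inv₀]
          rw [hD p, hD q, hqp]
          push_cast
          rw [← Complex.mul_conj]
          simp
          ring
        rw [e] at h
        have := (Complex.zero_le_real).mp h
        linarith
      rw [Complex.normSq_inv] at h2
      have hpos : 0 < Complex.normSq (A p q) := Complex.normSq_pos.mpr (hnz p q)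
      have h1 := hle p q
      have hge : 1 ≤ Complex.normSq (A p q) := by
        have hc : Complex.normSq (A p q) * (Complex.normSq (A p q))⁻¹ = 1 :=
          mul_inv_cancel₀ hpos.ne'
        nlinarith [mul_le_mul_of_nonneg_left h2 hpos.le]
      have heq : Complex.normSq (A p q) = 1 := le_antisymm h1 hge
      rw [Complex.mul_conj, heq]; norm_num
    -- key identity
    have key : ∀ i j k, A i k = A i j * A j k := by
      intro i j k
      set u := A i j with hu
      set w := A j k with hw
      set t := A i k with ht
      set d : ℂ := t - u * w with hd
      have h := quad3 A hPSD i j k 1 (-(starRingEnd ℂ) u) (-(starRingEnd ℂ) d)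
      have hji : A j i = (starRingEnd ℂ) u := herm i j
      have hki : A k i = (starRingEnd ℂ) t := herm i k
      have hkj : A k j = (starRingEnd ℂ) w := herm j k
      have hcd : (starRingEnd ℂ) d = (starRingEnd ℂ) t - (starRingEnd ℂ) u * (starRingEnd ℂ) w := by
        rw [hd]; simp
      have e : (starRingEnd ℂ) 1 * A i i * 1 + (starRingEnd ℂ) 1 * A i j * (-(starRingEnd ℂ) u)
          + (starRingEnd ℂ) 1 * A i k * (-(starRingEnd ℂ) d)
          + (starRingEnd ℂ) (-(starRingEnd ℂ) u) * A j i * 1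
          + (starRingEnd ℂ) (-(starRingEnd ℂ) u) * A j j * (-(starRingEnd ℂ) u)
          + (starRingEnd ℂ) (-(starRingEnd ℂ) u) * A j k * (-(starRingEnd ℂ) d)
          + (starRingEnd ℂ) (-(starRingEnd ℂ) d) * A k i * 1
          + (starRingEnd ℂ) (-(starRingEnd ℂ) d) * A k j * (-(starRingEnd ℂ) u)
          + (starRingEnd ℂ) (-(starRingEnd ℂ) d) * A k k * (-(starRingEnd ℂ) d)
          = -(d * (starRingEnd ℂ) d) := by
        rw [hD i, hD j, hD k, hji, hki, hkj, ← hu, ← hw, ← ht]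
        simp only [map_neg, Complex.conj_conj, _root_.map_one]
        linear_combination (-(1:ℂ)) * hmod i j + ((starRingEnd ℂ) d) * hd + d * hcd
      rw [e] at h
      have hdz : d = 0 := by
        rw [Complex.mul_conj] at h
        have h' : (0:ℝ) ≤ -Complex.normSq d := by
          have : ((-Complex.normSq d : ℝ) : ℂ) = -(Complex.normSq d : ℂ) := by push_cast; ring
          exact (Complex.zero_le_real).mp (by rw [this]; exact h)
        have := Complex.normSq_nonneg d
        have : Complex.normSq d = 0 := by linarith
        exact Complex.normSq_eq_zero.mp this
      have := sub_eq_zero.mp hdz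
      rw [ht, hu, hw] at this
      exact this
    refine ⟨?_, ?_, hD⟩
    · intro B C
      ext i k
      rw [Matrix.hadamard_apply, Matrix.mul_apply, Matrix.mul_apply, Finset.mul_sum]
      refine Finset.sum_congr rfl fun j _ => ?_
      rw [Matrix.hadamard_apply, Matrix.hadamard_apply]
      have := key i j k
      linear_combination B i j * C j k * this
    · intro B
      ext i j
      rw [Matrix.hadamard_apply, Matrix.conjTranspose_apply, Matrix.conjTranspose_apply,
        Matrix.hadamard_apply, herm i j]
      simp
end

section
/- Let n be a positive integer and let A ∈ M_n(ℂ) be a nonzero matrix such that the Schur map S_A is multiplicative. Then the following are equivalent: (1) S_A is *-preserving, i.e., S_A(B*) = S_A(B)* for all B (equivalently A is Hermitian); (2) ‖A‖ = n, where ‖·‖ is the spectral norm; (3) (1/n)·A is an orthogonal projection, i.e., ((1/n)A)² = (1/n)A and ((1/n)A)* = (1/n)A; (4) the operator norm of S_A as a linear map on M_n(ℂ) with the spectral norm equals 1. -/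
open Matrix

private lemma tec_apply {n : ℕ} (A : Matrix (Fin n) (Fin n) ℂ) (x : EuclideanSpace ℂ (Fin n))
    (i : Fin n) : (Matrix.toEuclideanCLM (𝕜 := ℂ) A x) i = ∑ j, A i j * x j := rfl

private lemma euclid_norm {n : ℕ} (x : EuclideanSpace ℂ (Fin n)) :
    ‖x‖ = Real.sqrt (∑ i, ‖x i‖ ^ 2) := by
  rw [EuclideanSpace.norm_eq]

private lemma coord_le {n : ℕ} (x : EuclideanSpace ℂ (Fin n)) (i : Fin n) :
    ‖x i‖ ≤ ‖x‖ := by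
  rw [euclid_norm]
  have h1 : ‖x i‖ ^ 2 ≤ ∑ j, ‖x j‖ ^ 2 :=
    Finset.single_le_sum (f := fun j => ‖x j‖ ^ 2) (fun j _ => sq_nonneg _)
      (Finset.mem_univ i)
  calc ‖x i‖ = Real.sqrt (‖x i‖ ^ 2) :=
        (Real.sqrt_sq (norm_nonneg _)).symm
    _ ≤ _ := Real.sqrt_le_sqrt h1

private lemma std_norm_le {n : ℕ} (i j : Fin n) (a : ℂ) :
    ‖Matrix.toEuclideanCLM (𝕜 := ℂ) (Matrix.single i j a)‖ ≤ ‖a‖ := by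
  apply ContinuousLinearMap.opNorm_le_bound _ (norm_nonneg a)
  intro x
  have hx : ∀ k, (Matrix.toEuclideanCLM (𝕜 := ℂ) (Matrix.single i j a) x) k
      = if k = i then a * x j else 0 := by
    intro k
    rw [tec_apply]
    simp [Matrix.single, Matrix.of_apply, ite_and, eq_comm (a := k)]
  rw [euclid_norm]
  simp only [hx, apply_ite (‖·‖), map_zero, norm_zero, apply_ite (· ^ 2),
    zero_pow (two_ne_zero), Finset.sum_ite_eq' Finset.univ i
      (fun _ => ‖a * x j‖ ^ 2), Finset.mem_univ, if_true]
  rw [Real.sqrt_sq (by positivity), norm_mul]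
  exact mul_le_mul_of_nonneg_left (coord_le x j) (norm_nonneg a)

private lemma norm_le_sum {n : ℕ} (M : Matrix (Fin n) (Fin n) ℂ) :
    ‖Matrix.toEuclideanCLM (𝕜 := ℂ) M‖ ≤ ∑ i, ∑ j, ‖M i j‖ := by
  conv_lhs => rw [Matrix.matrix_eq_sum_single M]
  rw [map_sum]
  refine (norm_sum_le _ _).trans (Finset.sum_le_sum fun i _ => ?_)
  rw [map_sum]
  exact (norm_sum_le _ _).trans (Finset.sum_le_sum fun j _ => std_norm_le i j _)

private lemma entry_le {n : ℕ} (M : Matrix (Fin n) (Fin n) ℂ) (i j : Fin n) :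
    ‖M i j‖ ≤ ‖Matrix.toEuclideanCLM (𝕜 := ℂ) M‖ := by
  have hx : ‖(EuclideanSpace.single j (1:ℂ) : EuclideanSpace ℂ (Fin n))‖ = 1 := by
    simp [EuclideanSpace.norm_single]
  have h := (Matrix.toEuclideanCLM (𝕜 := ℂ) M).le_opNorm (EuclideanSpace.single j (1:ℂ))
  rw [hx, mul_one] at h
  refine le_trans ?_ ((coord_le _ i).trans h)
  have : (Matrix.toEuclideanCLM (𝕜 := ℂ) M (EuclideanSpace.single j (1:ℂ))) i = M i j := by
    rw [tec_apply]
    simp [EuclideanSpace.single_apply]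
  rw [this]

private lemma sum_inv_identity {n : ℕ} (a : Fin n → ℝ) (ha : ∀ i, 0 < a i) :
    (∑ i, a i) * (∑ i, (a i)⁻¹) =
      (n : ℝ)^2 + (∑ i, ∑ j, (a i - a j)^2 / (a i * a j)) / 2 := by
  have h1 : ∀ i j : Fin n, (a i - a j)^2 / (a i * a j)
      = a i * (a j)⁻¹ + a j * (a i)⁻¹ - 2 := by
    intro i j
    have hi := (ha i).ne'
    have hj := (ha j).ne'
    field_simp
    ring
  have hswap : (∑ i, ∑ j, a j * (a i)⁻¹) = ∑ i, ∑ j, a i * (a j)⁻¹ :=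
    Finset.sum_comm
  have h2 : (∑ i, ∑ j, (a i - a j)^2 / (a i * a j))
      = 2 * (∑ i, ∑ j, a i * (a j)⁻¹) - 2 * (n:ℝ)^2 := by
    simp_rw [h1, Finset.sum_sub_distrib, Finset.sum_add_distrib, hswap, Finset.sum_const,
      Finset.card_univ, Fintype.card_fin, nsmul_eq_mul]
    ring
  rw [Finset.sum_mul_sum, h2]
  ring

private lemma sq_le_sum_mul {n : ℕ} (a : Fin n → ℝ) (ha : ∀ i, 0 < a i) :
    (n : ℝ)^2 ≤ (∑ i, a i) * (∑ i, (a i)⁻¹) := by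
  rw [sum_inv_identity a ha]
  have : 0 ≤ ∑ i, ∑ j, (a i - a j)^2 / (a i * a j) :=
    Finset.sum_nonneg fun i _ => Finset.sum_nonneg fun j _ =>
      div_nonneg (sq_nonneg _) (mul_pos (ha i) (ha j)).le
  linarith

private lemma eq_of_sum_le {n : ℕ} (a : Fin n → ℝ) (ha : ∀ i, 0 < a i)
    (h : (∑ i, a i) * (∑ i, (a i)⁻¹) ≤ (n : ℝ)^2) : ∀ i j, a i = a j := by
  rw [sum_inv_identity a ha] at h
  have h0 : (∑ i, ∑ j, (a i - a j)^2 / (a i * a j)) ≤ 0 := by linarith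
  have h1 : (∑ i : Fin n, ∑ j, (a i - a j)^2 / (a i * a j)) = 0 :=
    le_antisymm h0 (Finset.sum_nonneg fun i _ => Finset.sum_nonneg fun j _ =>
      div_nonneg (sq_nonneg _) (mul_pos (ha i) (ha j)).le)
  intro i j
  have h2 := (Finset.sum_eq_zero_iff_of_nonneg (fun i _ => Finset.sum_nonneg fun j _ =>
      div_nonneg (sq_nonneg _) (mul_pos (ha i) (ha j)).le)).mp h1 i (Finset.mem_univ i)
  have h3 := (Finset.sum_eq_zero_iff_of_nonneg (fun j _ =>
      div_nonneg (sq_nonneg _) (mul_pos (ha i) (ha j)).le)).mp h2 j (Finset.mem_univ j)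
  have hne := (mul_pos (ha i) (ha j)).ne'
  rw [div_eq_zero_iff] at h3
  rcases h3 with h3 | h3
  · have := sq_eq_zero_iff.mp h3
    linarith
  · exact absurd h3 hne

private lemma sq_eq_one_nonneg {x : ℝ} (h0 : 0 ≤ x) (h : x ^ 2 = 1) : x = 1 := by
  have h4 : (x - 1) * (x + 1) = 0 := by linear_combination h
  rcases mul_eq_zero.mp h4 with h5 | h5
  · linarith
  · linarith

private lemma lower_bound {n : ℕ} (hn : 0 < n) (A : Matrix (Fin n) (Fin n) ℂ)
    (c : Fin n → ℂ) (hc0 : ∀ i, c i ≠ 0) (hcc : ∀ i j, A i j = c i * (c j)⁻¹) :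
    (∑ i, ‖c i‖ ^ 2) * (∑ i, (‖c i‖ ^ 2)⁻¹)
      ≤ ‖Matrix.toEuclideanCLM (𝕜 := ℂ) A‖ ^ 2 := by
  haveI : Nonempty (Fin n) := ⟨⟨0, hn⟩⟩
  set S : ℝ := ∑ i, ‖c i‖ ^ 2 with hSdef
  set T : ℝ := ∑ i, (‖c i‖ ^ 2)⁻¹ with hTdef
  set N : ℝ := ‖Matrix.toEuclideanCLM (𝕜 := ℂ) A‖ with hNdef
  have hS : 0 < S := Finset.sum_pos
    (fun i _ => pow_pos (norm_pos_iff.mpr (hc0 i)) 2) Finset.univ_nonempty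
  have hT : 0 < T := Finset.sum_pos
    (fun i _ => inv_pos.mpr (pow_pos (norm_pos_iff.mpr (hc0 i)) 2)) Finset.univ_nonempty
  set x : EuclideanSpace ℂ (Fin n) :=
    (WithLp.equiv 2 _).symm (fun j => ((starRingEnd ℂ) (c j))⁻¹) with hxdef
  have hxj : ∀ j, x j = ((starRingEnd ℂ) (c j))⁻¹ := fun j => rfl
  have hAx : ∀ i, (Matrix.toEuclideanCLM (𝕜 := ℂ) A x) i = c i * (T : ℂ) := by
    intro i
    rw [tec_apply]
    have h5 : ∀ j, A i j * x j = c i * ((‖c j‖ ^ 2 : ℝ) : ℂ)⁻¹ := by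
      intro j
      rw [hxj, hcc i j, mul_assoc, ← mul_inv, Complex.mul_conj, Complex.normSq_eq_norm_sq]
    rw [Finset.sum_congr rfl fun j _ => h5 j, ← Finset.mul_sum]
    congr 1
    rw [hTdef]
    push_cast
    rfl
  have hnx : ‖x‖ = Real.sqrt T := by
    rw [euclid_norm]
    congr 1
    refine Finset.sum_congr rfl fun j _ => ?_
    rw [hxj, norm_inv, Complex.norm_conj, inv_pow]
  have hnAx : ‖Matrix.toEuclideanCLM (𝕜 := ℂ) A x‖ = T * Real.sqrt S := by
    rw [euclid_norm]
    have h6 : ∀ i, ‖(Matrix.toEuclideanCLM (𝕜 := ℂ) A x) i‖ ^ 2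
        = T ^ 2 * (‖c i‖ ^ 2) := by
      intro i
      rw [hAx, norm_mul, Complex.norm_real, Real.norm_eq_abs, abs_of_pos hT, mul_pow]
      ring
    rw [Finset.sum_congr rfl fun i _ => h6 i, ← Finset.mul_sum, ← hSdef,
      Real.sqrt_mul (sq_nonneg T), Real.sqrt_sq hT.le]
  have hle := (Matrix.toEuclideanCLM (𝕜 := ℂ) A).le_opNorm x
  rw [hnAx, hnx, ← hNdef] at hle
  have hsq : (T * Real.sqrt S) ^ 2 ≤ (N * Real.sqrt T) ^ 2 :=
    pow_le_pow_left₀ (mul_nonneg hT.le (Real.sqrt_nonneg S)) hle 2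
  rw [mul_pow, mul_pow, Real.sq_sqrt hS.le, Real.sq_sqrt hT.le] at hsq
  have h7 : S * T * T ≤ N ^ 2 * T := by
    calc S * T * T = T ^ 2 * S := by ring
      _ ≤ N ^ 2 * T := hsq
  exact le_of_mul_le_mul_right h7 hT
set_option maxHeartbeats 1600000 in
set_option synthInstance.maxHeartbeats 400000 in
theorem schur_multiplicative_star_tfae (n : ℕ) (hn : 0 < n)
    (A : Matrix (Fin n) (Fin n) ℂ) (hA : A ≠ 0)
    (hmul : ∀ B C : Matrix (Fin n) (Fin n) ℂ,
      Matrix.hadamard A (B * C) = Matrix.hadamard A B * Matrix.hadamard A C) :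
    [(∀ B : Matrix (Fin n) (Fin n) ℂ,
        Matrix.hadamard A Bᴴ = (Matrix.hadamard A B)ᴴ),
      ‖Matrix.toEuclideanCLM (𝕜 := ℂ) A‖ = n,
      (((1 / (n : ℂ)) • A) * ((1 / (n : ℂ)) • A) = (1 / (n : ℂ)) • A ∧
        ((1 / (n : ℂ)) • A)ᴴ = (1 / (n : ℂ)) • A),
      sSup ((fun B : Matrix (Fin n) (Fin n) ℂ =>
          ‖Matrix.toEuclideanCLM (𝕜 := ℂ) (Matrix.hadamard A B)‖) ''
        {B | ‖Matrix.toEuclideanCLM (𝕜 := ℂ) B‖ ≤ 1}) = 1].TFAE := by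
  haveI : Nonempty (Fin n) := ⟨⟨0, hn⟩⟩
  have hnC : (n : ℂ) ≠ 0 := Nat.cast_ne_zero.mpr hn.ne'
  set i0 : Fin n := ⟨0, hn⟩ with hi0
  -- multiplicativity entrywise
  have key : ∀ i j k, A i j = A i k * A k j := by
    intro i j k
    have h := congrFun (congrFun (hmul (Matrix.single i k 1)
      (Matrix.single k j 1)) i) j
    simpa [Matrix.hadamard_apply, Matrix.single_mul_single_same, Matrix.mul_apply,
      Matrix.single, Matrix.of_apply, ite_and, mul_ite, ite_mul, mul_zero, zero_mul,
      Finset.sum_ite_eq, Finset.sum_ite_eq'] using h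
  -- all entries nonzero
  have hex : ∃ i j, A i j ≠ 0 := by
    by_contra h
    push_neg at h
    exact hA (by ext i j; exact h i j)
  obtain ⟨i1, j1, h11⟩ := hex
  have hne : ∀ i j, A i j ≠ 0 := by
    intro i j hij
    apply h11
    rw [key i1 j1 i, key i j1 j, hij]
    ring
  have hdiag : ∀ i, A i i = 1 := by
    intro i
    have h := key i i i
    have : A i i * 1 = A i i * A i i := by rw [mul_one, ← h]
    exact (mul_left_cancel₀ (hne i i) this).symm
  set c : Fin n → ℂ := fun i => A i i0 with hcdef
  have hc0 : ∀ i, c i ≠ 0 := fun i => hne i i0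
  have hcc : ∀ i j, A i j = c i * (c j)⁻¹ := by
    intro i j
    have h2 : c j * A i0 j = 1 := by rw [hcdef, ← key j j i0, hdiag]
    rw [key i j i0, eq_inv_of_mul_eq_one_right h2]
  have hA2 : A * A = (n : ℂ) • A := by
    ext i j
    rw [Matrix.mul_apply, Matrix.smul_apply, smul_eq_mul]
    calc ∑ k, A i k * A k j = ∑ _k : Fin n, A i j :=
          Finset.sum_congr rfl fun k _ => (key i j k).symm
      _ = (n : ℂ) * A i j := by
          rw [Finset.sum_const, Finset.card_univ, Fintype.card_fin, nsmul_eq_mul]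
  have hci0 : c i0 = 1 := hdiag i0
  have hconj : ∀ i, ‖c i‖ = 1 → (starRingEnd ℂ) (c i) = (c i)⁻¹ := by
    intro i hi
    refine eq_inv_of_mul_eq_one_right ?_
    rw [Complex.mul_conj, Complex.normSq_eq_norm_sq, hi]
    norm_num
  have herm_of_abs : (∀ i, ‖c i‖ = 1) → Aᴴ = A := by
    intro h
    ext i j
    rw [Matrix.conjTranspose_apply, hcc j i, hcc i j]
    rw [show (star (c j * (c i)⁻¹) : ℂ) = (starRingEnd ℂ) (c j * (c i)⁻¹) from rfl,
      _root_.map_mul, map_inv₀, hconj i (h i), hconj j (h j), inv_inv, mul_comm]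
  have abs_of_herm : Aᴴ = A → ∀ i, ‖c i‖ = 1 := by
    intro hH i
    have h := congrFun (congrFun hH i) i0
    rw [Matrix.conjTranspose_apply] at h
    rw [hcc i0 i, hci0, one_mul] at h
    have h' : star ((c i)⁻¹) = c i := h
    rw [star_inv₀, inv_eq_iff_eq_inv] at h'
    have h2 : c i * (starRingEnd ℂ) (c i) = 1 := by
      rw [starRingEnd_apply, h', mul_inv_cancel₀ (hc0 i)]
    have h3 : ‖c i‖ ^ 2 = 1 := by
      have h4 := congrArg (‖·‖) h2
      rwa [norm_mul, Complex.norm_conj, norm_one, ← sq] at h4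
    have h4 : (‖c i‖ - 1) * (‖c i‖ + 1) = 0 := by
      linear_combination h3
    rcases mul_eq_zero.mp h4 with h5 | h5
    · linarith
    · have := norm_nonneg (c i)
      linarith
  have E1 : (∀ B : Matrix (Fin n) (Fin n) ℂ,
      Matrix.hadamard A Bᴴ = (Matrix.hadamard A B)ᴴ) ↔ Aᴴ = A := by
    constructor
    · intro h1
      have h := h1 (Matrix.of fun _ _ => (1:ℂ))
      ext i j
      have h2 := congrFun (congrFun h i) j
      simpa [Matrix.hadamard_apply, Matrix.conjTranspose_apply] using h2.symm
    · intro hH B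
      ext i j
      have h3 : (starRingEnd ℂ) (A j i) = A i j := by
        have h4 := congrFun (congrFun hH i) j
        rw [Matrix.conjTranspose_apply] at h4
        exact h4
      rw [Matrix.hadamard_apply, Matrix.conjTranspose_apply, Matrix.conjTranspose_apply,
        Matrix.hadamard_apply, star_mul']
      rw [← starRingEnd_apply, ← starRingEnd_apply, h3]
  have E3 : (((1 / (n : ℂ)) • A) * ((1 / (n : ℂ)) • A) = (1 / (n : ℂ)) • A ∧
      ((1 / (n : ℂ)) • A)ᴴ = (1 / (n : ℂ)) • A) ↔ Aᴴ = A := by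
    constructor
    · rintro ⟨-, h2⟩
      ext i j
      have h := congrFun (congrFun h2 i) j
      rw [Matrix.conjTranspose_smul, Matrix.smul_apply, Matrix.smul_apply, smul_eq_mul,
        smul_eq_mul] at h
      have hs : star (1 / (n:ℂ)) = 1 / (n:ℂ) := by
        rw [star_div₀, star_one, star_natCast]
      rw [hs] at h
      exact mul_left_cancel₀ (one_div_ne_zero hnC) h
    · intro hH
      refine ⟨?_, ?_⟩
      · rw [Matrix.smul_mul, Matrix.mul_smul, hA2, smul_smul, smul_smul]
        congr 1
        field_simp
      · rw [Matrix.conjTranspose_smul, hH]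
        congr 1
        rw [star_div₀, star_one, star_natCast]
  have hST := lower_bound hn A c hc0 hcc
  have herm_of_le : ‖Matrix.toEuclideanCLM (𝕜 := ℂ) A‖ ≤ n → Aᴴ = A := by
    intro h
    have h2 : (∑ i, ‖c i‖ ^ 2) * (∑ i, (‖c i‖ ^ 2)⁻¹) ≤ (n:ℝ)^2 :=
      hST.trans (pow_le_pow_left₀ (norm_nonneg _) h 2)
    have h3 := eq_of_sum_le (fun i => ‖c i‖ ^ 2)
      (fun i => pow_pos (norm_pos_iff.mpr (hc0 i)) 2) h2
    refine herm_of_abs fun i => ?_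
    have h4 : ‖c i‖ ^ 2 = 1 := by
      have h5 := h3 i i0
      simp only [hci0, norm_one, one_pow] at h5
      exact h5
    exact sq_eq_one_nonneg (norm_nonneg _) h4
  have norm_of_herm : Aᴴ = A → ‖Matrix.toEuclideanCLM (𝕜 := ℂ) A‖ = n := by
    intro hH
    obtain ⟨hp1, hp2⟩ := E3.mpr hH
    set p : Matrix (Fin n) (Fin n) ℂ := (1 / (n : ℂ)) • A with hpdef
    have hpne : ‖Matrix.toEuclideanCLM (𝕜 := ℂ) p‖ ≠ 0 := by
      have hentry : p i0 i0 = 1 / (n:ℂ) := by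
        rw [hpdef, Matrix.smul_apply, hdiag, smul_eq_mul, mul_one]
      have := entry_le p i0 i0
      rw [hentry] at this
      have habs : 0 < ‖1 / (n:ℂ)‖ :=
        norm_pos_iff.mpr (one_div_ne_zero hnC)
      intro h0
      rw [h0] at this
      linarith
    have hxx : ‖Matrix.toEuclideanCLM (𝕜 := ℂ) p‖ * ‖Matrix.toEuclideanCLM (𝕜 := ℂ) p‖
        = ‖Matrix.toEuclideanCLM (𝕜 := ℂ) p‖ := by
      rw [← CStarRing.norm_star_mul_self]
      congr 1
      rw [← map_star, ← _root_.map_mul]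

      congr 1
      rw [Matrix.star_eq_conjTranspose, hp2, hp1]
    have hp1' : ‖Matrix.toEuclideanCLM (𝕜 := ℂ) p‖ = 1 := by
      have := mul_right_cancel₀ hpne (hxx.trans (one_mul _).symm)
      exact this
    have hAp : A = (n : ℂ) • p := by
      rw [hpdef, smul_smul]
      rw [mul_one_div, div_self hnC, one_smul]
    rw [hAp, _root_.map_smul]
    rw [norm_smul ((n:ℕ):ℂ) (Matrix.toEuclideanCLM (𝕜 := ℂ) p), hp1', mul_one,
      Complex.norm_natCast]
  have E2 : ‖Matrix.toEuclideanCLM (𝕜 := ℂ) A‖ = (n:ℝ) ↔ Aᴴ = A :=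
    ⟨fun h => herm_of_le h.le, norm_of_herm⟩
  have hA1 : Matrix.hadamard A 1 = 1 := by
    ext i j
    rw [Matrix.hadamard_apply]
    by_cases hij : i = j
    · subst hij
      rw [Matrix.one_apply_eq, hdiag, one_mul]
    · rw [Matrix.one_apply_ne hij, mul_zero]
  have hId : ‖Matrix.toEuclideanCLM (𝕜 := ℂ) (1 : Matrix (Fin n) (Fin n) ℂ)‖ = 1 := by
    rw [_root_.map_one]
    exact norm_one
  have E4 : (sSup ((fun B : Matrix (Fin n) (Fin n) ℂ =>
      ‖Matrix.toEuclideanCLM (𝕜 := ℂ) (Matrix.hadamard A B)‖) ''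
      {B | ‖Matrix.toEuclideanCLM (𝕜 := ℂ) B‖ ≤ 1}) = 1) ↔ Aᴴ = A := by
    constructor
    · intro hsup
      -- bounded above
      have hbdd : BddAbove ((fun B : Matrix (Fin n) (Fin n) ℂ =>
          ‖Matrix.toEuclideanCLM (𝕜 := ℂ) (Matrix.hadamard A B)‖) ''
          {B | ‖Matrix.toEuclideanCLM (𝕜 := ℂ) B‖ ≤ 1}) := by
        refine ⟨∑ i, ∑ j, ‖A i j‖, ?_⟩
        rintro y ⟨B, hB, rfl⟩
        refine (norm_le_sum _).trans (Finset.sum_le_sum fun i _ =>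
          Finset.sum_le_sum fun j _ => ?_)
        rw [Matrix.hadamard_apply, norm_mul]
        refine mul_le_of_le_one_right (norm_nonneg _) ?_
        exact (entry_le B i j).trans hB
      set J : Matrix (Fin n) (Fin n) ℂ := Matrix.of (fun _ _ => (1:ℂ)) with hJdef
      have hJH : Jᴴ = J := by
        ext i j
        rw [Matrix.conjTranspose_apply]
        simp [hJdef]
      have hJ2 : J * J = (n : ℂ) • J := by
        ext i j
        rw [Matrix.mul_apply, Matrix.smul_apply]
        simp [hJdef, Finset.sum_const, Finset.card_univ]
      have hJne : ‖Matrix.toEuclideanCLM (𝕜 := ℂ) J‖ ≠ 0 := by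
        have h1 := entry_le J i0 i0
        have h2 : ‖J i0 i0‖ = 1 := by simp [hJdef]
        rw [h2] at h1
        intro h0
        rw [h0] at h1
        linarith
      have hnJ : ‖Matrix.toEuclideanCLM (𝕜 := ℂ) J‖ = n := by
        refine mul_right_cancel₀ hJne ?_
        calc ‖Matrix.toEuclideanCLM (𝕜 := ℂ) J‖ * ‖Matrix.toEuclideanCLM (𝕜 := ℂ) J‖
            = ‖star (Matrix.toEuclideanCLM (𝕜 := ℂ) J) * Matrix.toEuclideanCLM (𝕜 := ℂ) J‖ :=
              CStarRing.norm_star_mul_self.symm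
          _ = ‖Matrix.toEuclideanCLM (𝕜 := ℂ) ((n:ℂ) • J)‖ := by
              rw [← map_star, ← _root_.map_mul]
              congr 2
              rw [Matrix.star_eq_conjTranspose, hJH, hJ2]
          _ = (n : ℝ) * ‖Matrix.toEuclideanCLM (𝕜 := ℂ) J‖ := by
              rw [_root_.map_smul]
              rw [norm_smul ((n:ℕ):ℂ) (Matrix.toEuclideanCLM (𝕜 := ℂ) J),
                Complex.norm_natCast]
      have hB0 : ((1/(n:ℂ)) • J) ∈ {B : Matrix (Fin n) (Fin n) ℂ |
          ‖Matrix.toEuclideanCLM (𝕜 := ℂ) B‖ ≤ 1} := by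
        simp only [Set.mem_setOf_eq]
        rw [_root_.map_smul]
        rw [norm_smul (1/(n:ℂ)) (Matrix.toEuclideanCLM (𝕜 := ℂ) J), hnJ]
        rw [norm_div, norm_one, Complex.norm_natCast, one_div]
        rw [inv_mul_cancel₀ (by exact_mod_cast hn.ne')]
      have hAB0 : Matrix.hadamard A ((1/(n:ℂ)) • J) = (1/(n:ℂ)) • A := by
        ext i j
        rw [Matrix.hadamard_apply, Matrix.smul_apply, Matrix.smul_apply]
        simp only [hJdef, Matrix.of_apply, smul_eq_mul, mul_one]
        ring
      have hle := le_csSup hbdd (Set.mem_image_of_mem _ hB0)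
      rw [hsup, hAB0] at hle
      rw [_root_.map_smul] at hle
      rw [norm_smul (1/(n:ℂ)) (Matrix.toEuclideanCLM (𝕜 := ℂ) A), norm_div, norm_one,
        Complex.norm_natCast, one_div] at hle
      refine herm_of_le ?_
      have hn' : (0:ℝ) < n := by exact_mod_cast hn
      rw [inv_mul_le_iff₀ hn', mul_one] at hle
      exact hle
    · intro hH
      have habs := abs_of_herm hH
      set U : Matrix (Fin n) (Fin n) ℂ := Matrix.diagonal c with hUdef
      have hUU : Uᴴ * U = 1 := by
        rw [hUdef, Matrix.diagonal_conjTranspose, Matrix.diagonal_mul_diagonal]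
        ext i j
        by_cases hij : i = j
        · subst hij
          rw [Matrix.diagonal_apply_eq, Matrix.one_apply_eq]
          show star (c i) * c i = 1
          rw [← starRingEnd_apply, hconj i (habs i), inv_mul_cancel₀ (hc0 i)]
        · rw [Matrix.diagonal_apply_ne _ hij, Matrix.one_apply_ne hij]
      have hUUH : U * Uᴴ = 1 := by
        rw [hUdef, Matrix.diagonal_conjTranspose, Matrix.diagonal_mul_diagonal]
        ext i j
        by_cases hij : i = j
        · subst hij
          rw [Matrix.diagonal_apply_eq, Matrix.one_apply_eq]
          show c i * star (c i) = 1
          rw [← starRingEnd_apply, hconj i (habs i), mul_inv_cancel₀ (hc0 i)]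
        · rw [Matrix.diagonal_apply_ne _ hij, Matrix.one_apply_ne hij]
      have hUB : ∀ B : Matrix (Fin n) (Fin n) ℂ, Matrix.hadamard A B = U * B * Uᴴ := by
        intro B
        ext i j
        rw [Matrix.hadamard_apply, hUdef, Matrix.diagonal_conjTranspose,
          Matrix.mul_diagonal, Matrix.diagonal_mul, Pi.star_apply,
          ← starRingEnd_apply, hconj j (habs j), hcc i j]
        ring
      have hnU : ‖Matrix.toEuclideanCLM (𝕜 := ℂ) U‖ = 1 := by
        refine sq_eq_one_nonneg (norm_nonneg _) ?_
        rw [sq, ← CStarRing.norm_star_mul_self, ← map_star, ← _root_.map_mul,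
          Matrix.star_eq_conjTranspose, hUU, _root_.map_one]
        exact norm_one
      have hnUH : ‖Matrix.toEuclideanCLM (𝕜 := ℂ) Uᴴ‖ = 1 := by
        refine sq_eq_one_nonneg (norm_nonneg _) ?_
        rw [sq, ← CStarRing.norm_star_mul_self, ← map_star, ← _root_.map_mul,
          Matrix.star_eq_conjTranspose, Matrix.conjTranspose_conjTranspose, hUUH,
          _root_.map_one]
        exact norm_one
      refine IsGreatest.csSup_eq ⟨⟨1, le_of_eq hId, by simp only [hA1, hId]⟩, ?_⟩
      rintro y ⟨B, hB, rfl⟩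
      simp only [Set.mem_setOf_eq] at hB
      calc ‖Matrix.toEuclideanCLM (𝕜 := ℂ) (Matrix.hadamard A B)‖
          = ‖Matrix.toEuclideanCLM (𝕜 := ℂ) U * Matrix.toEuclideanCLM (𝕜 := ℂ) B *
              Matrix.toEuclideanCLM (𝕜 := ℂ) Uᴴ‖ := by
            rw [hUB B, _root_.map_mul, _root_.map_mul]
        _ ≤ ‖Matrix.toEuclideanCLM (𝕜 := ℂ) U * Matrix.toEuclideanCLM (𝕜 := ℂ) B‖ *
              ‖Matrix.toEuclideanCLM (𝕜 := ℂ) Uᴴ‖ := norm_mul_le _ _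
        _ ≤ ‖Matrix.toEuclideanCLM (𝕜 := ℂ) U‖ * ‖Matrix.toEuclideanCLM (𝕜 := ℂ) B‖ *
              ‖Matrix.toEuclideanCLM (𝕜 := ℂ) Uᴴ‖ := by
            refine mul_le_mul_of_nonneg_right (norm_mul_le _ _) (norm_nonneg _)
        _ ≤ 1 := by
            rw [hnU, hnUH, one_mul, mul_one]
            exact hB
  tfae_have 1 ↔ 2 := E1.trans E2.symm
  tfae_have 1 ↔ 3 := E1.trans E3.symm
  tfae_have 1 ↔ 4 := E1.trans E4.symm
  tfae_finish
end

section
/- Let F be a field, n a positive integer, and A ∈ M_n(F) a nonzero matrix. Then the following are equivalent: (1) the Schur map S_A is multiplicative; (2) there exists an invertible diagonal matrix Λ ∈ M_n(F) such that A ∘ B = Λ B Λ^{-1} for all B ∈ M_n(F); (3) A_{ii} = 1 for all i and A_{ij} = A_{ik} · A_{kj} for all indices i, j, k. -/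
open Matrix

private lemma hadamard_stdBasis {F : Type*} [Field F] {n : ℕ}
    (A : Matrix (Fin n) (Fin n) F) (i j : Fin n) (c : F) :
    Matrix.hadamard A (Matrix.single i j c) =
      Matrix.single i j (A i j * c) := by
  ext a b
  simp only [Matrix.hadamard_apply, Matrix.single]
  by_cases h1 : i = a <;> by_cases h2 : j = b <;> simp [h1, h2]

theorem schur_multiplicative_tfae_field (F : Type*) [Field F] (n : ℕ) (hn : 0 < n)
    (A : Matrix (Fin n) (Fin n) F) (hA : A ≠ 0) :
    [(∀ B C : Matrix (Fin n) (Fin n) F,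
        Matrix.hadamard A (B * C) = Matrix.hadamard A B * Matrix.hadamard A C),
      (∃ Λ : Fin n → F, (∀ i, Λ i ≠ 0) ∧
        ∀ B : Matrix (Fin n) (Fin n) F,
          Matrix.hadamard A B = Matrix.diagonal Λ * B * (Matrix.diagonal Λ)⁻¹),
      ((∀ i, A i i = 1) ∧ ∀ i j k, A i j = A i k * A k j)].TFAE := by
  tfae_have 1 → 3 := by
    intro h1
    -- the multiplicative relation on entries
    have key : ∀ i j k : Fin n, A i j = A i k * A k j := by
      intro i j k
      have h := h1 (Matrix.single i k 1) (Matrix.single k j 1)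
      rw [Matrix.single_mul_single_same, hadamard_stdBasis, hadamard_stdBasis,
        hadamard_stdBasis, Matrix.single_mul_single_same] at h
      have := congrFun (congrFun h i) j
      simpa using this
    -- some entry is nonzero
    obtain ⟨p, q, hpq⟩ : ∃ p q, A p q ≠ 0 := by
      by_contra h
      push_neg at h
      exact hA (by ext a b; simpa using h a b)
    have hpp : A p p = 1 := by
      have h : A p p * A p q = 1 * A p q := by rw [one_mul]; exact (key p q p).symm
      exact mul_right_cancel₀ hpq h
    refine ⟨fun i => ?_, key⟩
    have hpi : A p i ≠ 0 := by
      intro h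
      have := key p p i
      rw [h, zero_mul, hpp] at this
      exact one_ne_zero this
    have := key p i i
    nth_rewrite 1 [show A p i = A p i * 1 from (mul_one _).symm] at this
    exact (mul_left_cancel₀ hpi this).symm
  tfae_have 3 → 2 := by
    rintro ⟨hdiag, hmul⟩
    set p : Fin n := ⟨0, hn⟩
    have hΛ : ∀ i, A i p ≠ 0 := by
      intro i h
      have := hmul i i p
      rw [h, zero_mul] at this
      exact one_ne_zero ((hdiag i) ▸ this)
    refine ⟨fun i => A i p, fun i h => hΛ i h, fun B => ?_⟩
    have hinv : (Matrix.diagonal fun i => A i p)⁻¹ =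
        Matrix.diagonal fun i => (A i p)⁻¹ := by
      apply Matrix.inv_eq_right_inv
      rw [Matrix.diagonal_mul_diagonal]
      simp only [mul_inv_cancel₀ (hΛ _)]
      exact Matrix.diagonal_one
    rw [hinv]
    ext i j
    rw [Matrix.hadamard_apply, Matrix.mul_diagonal, Matrix.diagonal_mul]
    have h2 : A i j * A j p = A i p := (hmul i p j).symm
    field_simp [hΛ j]
    linear_combination B i j * h2
  tfae_have 2 → 1 := by
    rintro ⟨Λ, hΛ, h⟩ B C
    have hdet : IsUnit (Matrix.diagonal Λ).det := by
      rw [Matrix.det_diagonal]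
      exact (Finset.prod_ne_zero_iff.2 fun i _ => hΛ i).isUnit
    have hDinv : (Matrix.diagonal Λ)⁻¹ * Matrix.diagonal Λ = 1 :=
      Matrix.nonsing_inv_mul _ hdet
    rw [h, h, h]
    rw [show Matrix.diagonal Λ * B * (Matrix.diagonal Λ)⁻¹ *
      (Matrix.diagonal Λ * C * (Matrix.diagonal Λ)⁻¹) =
      Matrix.diagonal Λ * B * ((Matrix.diagonal Λ)⁻¹ * Matrix.diagonal Λ) *
      C * (Matrix.diagonal Λ)⁻¹ by noncomm_ring]
    rw [hDinv, mul_one]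
    noncomm_ring
  tfae_finish
end

section
/- Let F be a field and n a positive integer. Consider the set L of nonzero matrices A ∈ M_n(F) whose Schur map S_A is multiplicative. Then: (1) the all-ones matrix J belongs to L (and S_J is the identity map); (2) if A, B ∈ L then the Schur product A ∘ B belongs to L; (3) if A ∈ L then every entry of A is nonzero and the entrywise inverse A^{[-1]} belongs to L, with A ∘ A^{[-1]} = J. In particular, (L, ∘) is an abelian group with identity J. -/
open Matrix

lemma rel_of_mul' (F : Type*) [Field F] (n : ℕ) (A : Matrix (Fin n) (Fin n) F)
    (hA : ∀ B C : Matrix (Fin n) (Fin n) F,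
      Matrix.hadamard A (B * C) = Matrix.hadamard A B * Matrix.hadamard A C) :
    ∀ i k j, A i j = A i k * A k j := by
  intro i k j
  have h := congrFun (congrFun (hA (single i k 1) (single k j 1)) i) j
  simp [Matrix.hadamard, Matrix.mul_apply, Matrix.single, ite_and,
    Finset.sum_ite_eq, mul_ite, ite_mul] at h
  exact h

lemma mul_of_rel' (F : Type*) [Field F] (n : ℕ) (A : Matrix (Fin n) (Fin n) F)
    (h : ∀ i k j, A i j = A i k * A k j) :
    ∀ B C : Matrix (Fin n) (Fin n) F,
      Matrix.hadamard A (B * C) = Matrix.hadamard A B * Matrix.hadamard A C := by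
  intro B C
  ext i j
  simp only [Matrix.hadamard_apply, Matrix.mul_apply, Finset.mul_sum]
  refine Finset.sum_congr rfl fun k _ => ?_
  rw [h i k j]; ring

lemma entries_ne_zero' (F : Type*) [Field F] (n : ℕ) (A : Matrix (Fin n) (Fin n) F)
    (hA : A ≠ 0) (h : ∀ i k j, A i j = A i k * A k j) :
    ∀ i j, A i j ≠ 0 := by
  obtain ⟨p, q, hpq⟩ : ∃ p q, A p q ≠ 0 := by
    by_contra hc
    push_neg at hc
    exact hA (by ext i j; simp [hc i j])
  have hrow : ∀ k, A p k ≠ 0 := fun k =>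
    left_ne_zero_of_mul (by rw [← h p k q]; exact hpq)
  have hcol : ∀ k, A k q ≠ 0 := fun k =>
    right_ne_zero_of_mul (by rw [← h p k q]; exact hpq)
  have hqq : A q q = 1 :=
    (mul_left_cancel₀ hpq (by rw [mul_one, ← h p q q])).symm
  have hqp : A q p ≠ 0 := by
    intro hz
    have := h q p q
    rw [hz, zero_mul] at this
    rw [this] at hqq
    exact one_ne_zero hqq.symm
  intro i j
  have hip : A i p ≠ 0 := by
    rw [h i q p]
    exact mul_ne_zero (hcol i) hqp
  rw [h i p j]
  exact mul_ne_zero hip (hrow j)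

theorem schur_multiplicative_matrices_abelian_group
    (F : Type*) [Field F] (n : ℕ) (hn : 0 < n)
    (L : Set (Matrix (Fin n) (Fin n) F))
    (hL : L = {A | A ≠ 0 ∧ ∀ B C : Matrix (Fin n) (Fin n) F,
      Matrix.hadamard A (B * C) = Matrix.hadamard A B * Matrix.hadamard A C}) :
    -- (1) the all-ones matrix J belongs to L, and S_J is the identity map
    ((Matrix.of fun _ _ => (1 : F)) ∈ L ∧
      ∀ B : Matrix (Fin n) (Fin n) F,
        Matrix.hadamard (Matrix.of fun _ _ => (1 : F)) B = B) ∧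
    -- (2) L is closed under the Schur product
    (∀ A ∈ L, ∀ B ∈ L, Matrix.hadamard A B ∈ L) ∧
    -- (3) entrywise inverses: every entry is nonzero, the entrywise inverse
    -- belongs to L, and Schur-multiplying by it gives J
    (∀ A ∈ L, (∀ i j, A i j ≠ 0) ∧
      (Matrix.of fun i j => (A i j)⁻¹ : Matrix (Fin n) (Fin n) F) ∈ L ∧
      Matrix.hadamard A (Matrix.of fun i j => (A i j)⁻¹) =
        Matrix.of fun _ _ => (1 : F)) ∧
    -- in particular, (L, ∘) is an abelian group with identity J:
    -- commutativity and associativity of the Schur product on L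
    (∀ A ∈ L, ∀ B ∈ L, Matrix.hadamard A B = Matrix.hadamard B A) ∧
    (∀ A ∈ L, ∀ B ∈ L, ∀ C ∈ L,
      Matrix.hadamard (Matrix.hadamard A B) C =
        Matrix.hadamard A (Matrix.hadamard B C)) := by
  subst hL
  have i0 : Fin n := ⟨0, hn⟩
  refine ⟨⟨⟨?_, ?_⟩, ?_⟩, ?_, ?_, ?_, ?_⟩
  · -- J ≠ 0
    intro h
    have := congrFun (congrFun h i0) i0
    simp at this
  · -- J multiplicative
    exact mul_of_rel' F n _ (fun i k j => by simp)
  · -- hadamard J B = B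
    intro B
    ext i j
    simp [Matrix.hadamard]
  · -- closure under Schur product
    intro A hA B hB
    have relA := rel_of_mul' F n A hA.2
    have relB := rel_of_mul' F n B hB.2
    have hAnz := entries_ne_zero' F n A hA.1 relA
    have hBnz := entries_ne_zero' F n B hB.1 relB
    constructor
    · intro h
      have := congrFun (congrFun h i0) i0
      simp [Matrix.hadamard] at this
      rcases this with h' | h'
      · exact hAnz i0 i0 h'
      · exact hBnz i0 i0 h'
    · refine mul_of_rel' F n _ (fun i k j => ?_)
      simp only [Matrix.hadamard_apply]
      rw [relA i k j, relB i k j]; ring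
  · -- entrywise inverses
    intro A hA
    have relA := rel_of_mul' F n A hA.2
    have hAnz := entries_ne_zero' F n A hA.1 relA
    refine ⟨hAnz, ⟨?_, ?_⟩, ?_⟩
    · intro h
      have := congrFun (congrFun h i0) i0
      simp at this
      exact hAnz i0 i0 this
    · refine mul_of_rel' F n _ (fun i k j => ?_)
      simp only [Matrix.of_apply]
      rw [relA i k j, mul_inv]
    · ext i j
      simp [Matrix.hadamard, mul_inv_cancel₀ (hAnz i j)]
  · -- commutativity
    intro A _ B _
    exact Matrix.hadamard_comm A B
  · -- associativity
    intro A _ B _ C _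
    exact Matrix.hadamard_assoc A B C
end

section
/- Let F be a field and A ∈ M_2(F) a nonzero matrix. Then the Schur map S_A is multiplicative if and only if there exists a nonzero λ ∈ F such that A = [[1, λ], [λ^{-1}, 1]]. -/
open Matrix

theorem schur_multiplicative_two_by_two (F : Type*) [Field F]
    (A : Matrix (Fin 2) (Fin 2) F) (hA : A ≠ 0) :
    (∀ B C : Matrix (Fin 2) (Fin 2) F,
        Matrix.hadamard A (B * C) = Matrix.hadamard A B * Matrix.hadamard A C) ↔
      ∃ lam : F, lam ≠ 0 ∧ A = !![1, lam; lam⁻¹, 1] := by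
  constructor
  · intro h
    have e010 := congrFun (congrFun (h !![0,1;0,0] !![0,0;1,0]) 0) 0
    have e001 := congrFun (congrFun (h !![1,0;0,0] !![0,1;0,0]) 0) 1
    have e011 := congrFun (congrFun (h !![0,1;0,0] !![0,0;0,1]) 0) 1
    have e110 := congrFun (congrFun (h !![0,0;0,1] !![0,0;1,0]) 1) 0
    have e101 := congrFun (congrFun (h !![0,0;1,0] !![0,1;0,0]) 1) 1
    simp [Matrix.hadamard, Matrix.mul_apply, Fin.sum_univ_two] at e010 e001 e011 e110 e101
    by_cases h01 : A 0 1 = 0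
    · exfalso
      apply hA
      ext i j
      rw [h01] at e010 e101
      simp at e010 e101
      rw [e101] at e110
      simp at e110
      fin_cases i <;> fin_cases j <;> simp [e010, e101, e110, h01]
    · refine ⟨A 0 1, h01, ?_⟩
      have h00 : A 0 0 = 1 := by
        exact mul_right_cancel₀ h01 (show A 0 0 * A 0 1 = 1 * A 0 1 by linear_combination -e001)
      have h11 : A 1 1 = 1 := by
        exact mul_left_cancel₀ h01 (show A 0 1 * A 1 1 = A 0 1 * 1 by linear_combination -e011)
      have h10 : A 1 0 = (A 0 1)⁻¹ := by
        apply eq_inv_of_mul_eq_one_left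
        rw [h11] at e101
        linear_combination -e101
      ext i j
      fin_cases i <;> fin_cases j <;> simp [h00, h11, h10]
  · rintro ⟨lam, hl, rfl⟩
    intro B C
    ext i j
    fin_cases i <;> fin_cases j <;>
      simp [Matrix.hadamard, Matrix.mul_apply, Fin.sum_univ_two] <;>
      first
        | ring1
        | (field_simp <;> ring1)
end

section
/- Let n be a positive integer. The set of matrices A ∈ M_n(ℝ) such that A is positive semidefinite and the Schur map S_A is multiplicative has exactly 2^{n−1} elements. -/
open Matrix

noncomputable def schurSign (b : Bool) : ℝ := if b then 1 else -1

lemma schurSign_sq (b : Bool) : schurSign b * schurSign b = 1 := by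
  cases b <;> norm_num [schurSign]

lemma schurSign_inj : Function.Injective schurSign := by
  intro a b hab
  cases a <;> cases b <;> norm_num [schurSign] at hab <;> rfl

noncomputable def schurVec (m : ℕ) (g : Fin m → Bool) : Fin (m + 1) → ℝ :=
  Fin.cons 1 (fun j => schurSign (g j))

lemma schurVec_sq (m : ℕ) (g : Fin m → Bool) (i : Fin (m + 1)) :
    schurVec m g i * schurVec m g i = 1 := by
  refine Fin.cases ?_ ?_ i <;> simp [schurVec, schurSign_sq]

noncomputable def schurMat (m : ℕ) (g : Fin m → Bool) :
    Matrix (Fin (m + 1)) (Fin (m + 1)) ℝ :=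
  vecMulVec (schurVec m g) (schurVec m g)

theorem card_posSemidef_schur_multiplicative_real (n : ℕ) (hn : 0 < n) :
    Set.ncard {A : Matrix (Fin n) (Fin n) ℝ | A ≠ 0 ∧ A.PosSemidef ∧
      ∀ B C : Matrix (Fin n) (Fin n) ℝ,
        Matrix.hadamard A (B * C) = Matrix.hadamard A B * Matrix.hadamard A C} =
      2 ^ (n - 1) := by
  obtain ⟨m, rfl⟩ := Nat.exists_eq_succ_of_ne_zero hn.ne'
  have hinj : Function.Injective (schurMat m) := by
    intro g g' h
    funext j
    have := congrFun (congrFun h 0) j.succ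
    simp [schurMat, vecMulVec_apply, schurVec] at this
    exact schurSign_inj this
  have hset : {A : Matrix (Fin (m+1)) (Fin (m+1)) ℝ | A ≠ 0 ∧ A.PosSemidef ∧
      ∀ B C : Matrix (Fin (m+1)) (Fin (m+1)) ℝ,
        Matrix.hadamard A (B * C) = Matrix.hadamard A B * Matrix.hadamard A C} =
      Set.range (schurMat m) := by
    ext A
    constructor
    · rintro ⟨hA0, hpsd, hmul⟩
      have hsym : ∀ i j, A j i = A i j := by
        intro i j
        have := hpsd.1.apply i j
        simpa using this
      have h3 : ∀ i j k, A i j = A i k * A k j := by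
        intro i j k
        have := congrFun (congrFun
          (hmul (single i k 1) (single k j 1)) i) j
        simp only [single_mul_single_same, one_mul] at this
        rw [hadamard_apply, single_apply_same, mul_one] at this
        rw [this, mul_apply]
        rw [Finset.sum_eq_single k]
        · simp only [hadamard_apply, single_apply_same]; ring
        · intro b _ hb
          simp [hadamard_apply, single_apply_of_ne (i := i) (j := k) (i' := i) (j' := b) (c := (1:ℝ)) (fun h => hb h.2.symm)]
        · simp
      have h00 : A 0 0 = 1 := by
        have h1 : A 0 0 = A 0 0 * A 0 0 := h3 0 0 0
        rcases mul_eq_zero.mp (show A 0 0 * (A 0 0 - 1) = 0 by ring_nf; linarith) with h | h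
        · exfalso
          apply hA0
          have h0 : ∀ k, A 0 k = 0 := by
            intro k
            have h2 := h3 0 0 k
            rw [h, hsym 0 k] at h2
            exact mul_self_eq_zero.mp h2.symm
          ext i j
          rw [h3 i j 0, h0 j, mul_zero]
          rfl
        · simpa using sub_eq_zero.mp h
      have hAk : ∀ k, A 0 k * A 0 k = 1 := by
        intro k
        have h2 := h3 0 0 k
        rw [h00, hsym 0 k] at h2
        exact h2.symm
      refine ⟨fun j => decide (A 0 j.succ = 1), ?_⟩
      have hwA : ∀ i, schurVec m (fun j => decide (A 0 j.succ = 1)) i = A 0 i := by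
        intro i
        refine Fin.cases ?_ ?_ i
        · simp [schurVec, h00]
        · intro j
          rcases mul_self_eq_one_iff.mp (hAk j.succ) with h | h
          · simp [schurVec, schurSign, h]
          · have hne : ¬ A 0 j.succ = 1 := by rw [h]; norm_num
            simp [schurVec, schurSign, hne, h]
            intro h2
            linarith
      ext i j
      simp only [schurMat, vecMulVec_apply, hwA]
      rw [h3 i j 0, hsym 0 i]
    · rintro ⟨g, rfl⟩
      refine ⟨?_, ?_, ?_⟩
      · intro h
        have := congrFun (congrFun h 0) 0
        simp [schurMat, vecMulVec_apply, schurVec] at this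
      · have : schurMat m g = (replicateRow Unit (schurVec m g))ᴴ * replicateRow Unit (schurVec m g) := by
          ext i j
          simp [schurMat, vecMulVec_apply, mul_apply, replicateRow, mul_comm]
        rw [this]
        exact posSemidef_conjTranspose_mul_self _
      · intro B C
        ext i j
        simp only [hadamard_apply, schurMat, vecMulVec_apply, mul_apply, Finset.mul_sum]
        refine Finset.sum_congr rfl fun k _ => ?_
        have h1 := schurVec_sq m g k
        linear_combination (-(schurVec m g i * schurVec m g j * B i k * C k j)) * h1
  rw [hset, ← Nat.card_coe_set_eq, Nat.card_range_of_injective hinj]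
  simp [Nat.card_eq_fintype_card]
end

section
/- Let A : ℕ × ℕ → ℂ be an infinite matrix such that A(i,i) = 1 for all i and every column of A is a scalar multiple of the first column (equivalently, A(i,j) = A(i,k)·A(k,j) for all i, j, k). Then A is not bounded in the operator norm: there is no continuous linear operator T on the Hilbert space ℓ²(ℕ, ℂ) whose matrix coefficients are the entries of A, i.e., satisfying ⟨e_i, T e_j⟩ = A(i,j) for all i, j, where (e_i) is the standard orthonormal basis of ℓ²(ℕ, ℂ). -/
open scoped InnerProductSpace

theorem consistent_infinite_matrix_unbounded
    (A : ℕ → ℕ → ℂ) (hdiag : ∀ i, A i i = 1)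
    (hcons : ∀ i j k, A i j = A i k * A k j) :
    ¬ ∃ T : lp (fun _ : ℕ => ℂ) 2 →L[ℂ] lp (fun _ : ℕ => ℂ) 2,
      ∀ i j : ℕ, ⟪lp.single 2 i (1 : ℂ), T (lp.single 2 j (1 : ℂ))⟫_ℂ = A i j := by
  rintro ⟨T, hT⟩
  set e : ℕ → lp (fun _ : ℕ => ℂ) 2 := fun i => lp.single 2 i (1 : ℂ) with he
  have hnorme : ∀ i, ‖e i‖ = 1 := by
    intro i
    have := lp.norm_single (p := 2) (E := fun _ : ℕ => ℂ) (by norm_num)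
      i (1 : ℂ)
    exact this.trans norm_one
  -- coefficient extraction
  have hcoef : ∀ i j, (T (e j) : ∀ _ : ℕ, ℂ) i = A i j := by
    intro i j
    show (T (lp.single 2 j 1) : ∀ _ : ℕ, ℂ) i = A i j
    rw [← hT i j, lp.inner_single_left]
    simp [RCLike.inner_apply]
  -- bound ‖A 0 i‖ ≤ ‖T‖
  have hbound : ∀ i, ‖A 0 i‖ ≤ ‖T‖ := by
    intro i
    calc ‖A 0 i‖ = ‖⟪e 0, T (e i)⟫_ℂ‖ := by rw [hT 0 i]
    _ ≤ ‖e 0‖ * ‖T (e i)‖ := norm_inner_le_norm _ _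
    _ ≤ 1 * (‖T‖ * ‖e i‖) := by
        rw [hnorme 0, one_mul, one_mul]; exact T.le_opNorm _
    _ = ‖T‖ := by rw [hnorme i]; ring
  have hT1 : (1 : ℝ) ≤ ‖T‖ := by
    have h := hbound 0
    rw [hdiag 0, norm_one] at h
    exact h
  have hTpos : (0 : ℝ) < ‖T‖ := by linarith
  -- ‖A i 0‖ * ‖A 0 i‖ = 1
  have hmul : ∀ i, ‖A i 0‖ * ‖A 0 i‖ = 1 := by
    intro i
    have := hcons i i 0
    rw [hdiag i] at this
    calc ‖A i 0‖ * ‖A 0 i‖ = ‖A i 0 * A 0 i‖ := (norm_mul _ _).symm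
    _ = ‖(1 : ℂ)‖ := by rw [← this]
    _ = 1 := norm_one
  -- lower bound on ‖A i 0‖
  have hlow : ∀ i, 1 / ‖T‖ ≤ ‖A i 0‖ := by
    intro i
    rw [div_le_iff₀ hTpos]
    calc (1 : ℝ) = ‖A i 0‖ * ‖A 0 i‖ := (hmul i).symm
    _ ≤ ‖A i 0‖ * ‖T‖ := by
        exact mul_le_mul_of_nonneg_left (hbound i) (norm_nonneg _)
  -- summability of ‖A i 0‖ ^ 2
  have hmem : Memℓp (fun i => A i 0) 2 := by
    have := lp.memℓp (T (e 0))
    have hfun : (fun i => A i 0) = (T (e 0) : ∀ _ : ℕ, ℂ) := by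
      funext i; exact (hcoef i 0).symm
    rwa [hfun]
  have hsum : Summable fun i => ‖A i 0‖ ^ (2 : ℝ) := by
    have := hmem.summable (p := 2) (by norm_num)
    simpa using this
  have htend := hsum.tendsto_atTop_zero
  have hev : ∀ᶠ i in Filter.atTop, ‖A i 0‖ ^ (2 : ℝ) < (1 / ‖T‖) ^ (2 : ℝ) := by
    refine htend.eventually_lt_const ?_
    positivity
  obtain ⟨i, hi⟩ := hev.exists
  have : (1 / ‖T‖) ^ (2 : ℝ) ≤ ‖A i 0‖ ^ (2 : ℝ) :=
    Real.rpow_le_rpow (by positivity) (hlow i) (by norm_num)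
  linarith
end

section
/- Let n be a positive integer and let A ∈ M_n(ℂ) be a nonzero matrix such that the Schur map S_A is multiplicative. Then every entry of A is nonzero, and S_A is a bijection of M_n(ℂ); in particular S_A is an algebra automorphism of M_n(ℂ). -/
open Matrix

theorem schur_multiplicative_bijective_automorphism (n : ℕ) (hn : 0 < n)
    (A : Matrix (Fin n) (Fin n) ℂ) (hA : A ≠ 0)
    (hmul : ∀ B C : Matrix (Fin n) (Fin n) ℂ,
      Matrix.hadamard A (B * C) = Matrix.hadamard A B * Matrix.hadamard A C) :
    (∀ i j, A i j ≠ 0) ∧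
      Function.Bijective (fun B : Matrix (Fin n) (Fin n) ℂ => Matrix.hadamard A B) ∧
      ∃ e : Matrix (Fin n) (Fin n) ℂ ≃ₐ[ℂ] Matrix (Fin n) (Fin n) ℂ,
        ∀ B, e B = Matrix.hadamard A B := by
  have hsingle : ∀ i k : Fin n, ∀ c : ℂ,
      Matrix.hadamard A (Matrix.single i k c) = Matrix.single i k (A i k * c) := by
    intro i k c
    ext p q
    simp [Matrix.hadamard, Matrix.single]
    aesop
  -- key multiplicative relation on entries
  have key : ∀ i j k : Fin n, A i j = A i k * A k j := by
    intro i j k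
    have h := hmul (Matrix.single i k 1) (Matrix.single k j 1)
    rw [Matrix.single_mul_single_same, hsingle, hsingle, hsingle,
      Matrix.single_mul_single_same] at h
    have h2 := congrFun (congrFun h i) j
    simpa [Matrix.single] using h2
  -- some nonzero entry
  obtain ⟨p, hp⟩ : ∃ p, A p ≠ 0 := by
    by_contra h
    push_neg at h
    exact hA (funext h)
  obtain ⟨q, hpq⟩ : ∃ q, A p q ≠ 0 := by
    by_contra h
    push_neg at h
    exact hp (funext h)
  have hne : ∀ i j, A i j ≠ 0 := by
    have hrow : ∀ j, A p j ≠ 0 := fun j h => hpq (by rw [key p q j, h, zero_mul])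
    intro i j h
    exact hrow j (by rw [key p j i, h, mul_zero])
  have hdiag : ∀ i, A i i = 1 := by
    intro i
    have h : A i i * 1 = A i i * A i i := by rw [mul_one]; exact key i i i
    exact (mul_left_cancel₀ (hne i i) h).symm
  -- inverse matrix entrywise
  set A' : Matrix (Fin n) (Fin n) ℂ := fun i j => (A i j)⁻¹ with hA'
  have hleft : ∀ B, Matrix.hadamard A' (Matrix.hadamard A B) = B := by
    intro B
    ext i j
    simp [Matrix.hadamard, hA', ← mul_assoc, inv_mul_cancel₀ (hne i j)]
  have hright : ∀ B, Matrix.hadamard A (Matrix.hadamard A' B) = B := by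
    intro B
    ext i j
    simp [Matrix.hadamard, hA', ← mul_assoc, mul_inv_cancel₀ (hne i j)]
  refine ⟨hne, ⟨Function.LeftInverse.injective hleft,
    Function.RightInverse.surjective hright⟩, ?_⟩
  refine ⟨{ toFun := fun B => Matrix.hadamard A B
            invFun := fun B => Matrix.hadamard A' B
            left_inv := hleft
            right_inv := hright
            map_mul' := hmul
            map_add' := fun B C => Matrix.hadamard_add A B C
            commutes' := ?_ }, fun B => rfl⟩
  intro c
  ext i j
  by_cases h : i = j
  · subst h
    simp [Matrix.hadamard, Matrix.algebraMap_matrix_apply, hdiag i]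
  · simp [Matrix.hadamard, Matrix.algebraMap_matrix_apply, h]
end
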